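/- arXiv:1707.02149 — 5 statements merged into one kernel-verified Lean document; each statement's English description precedes it below -/
import Mathlib

section
/- Let N = (N_t)_{t≥0} be a counting process with arrival times T_n = W_1 + ⋯ + W_n (T_0 = 0, W_n > 0) and no explosion, let X = (X_n) be a sequence of positive random variables (claim sizes), and let S_t = Σ_{k=1}^{N_t} X_k be the aggregate claims process with natural filtration F_t = σ(S_u : u ≤ t). Then for every t ≥ 0 and n ∈ ℕ₀, the trace σ-algebras satisfy F_t ∩ {N_t = n} = σ(σ(W_1,…,W_n) ∪ σ(X_1,…,X_n)) ∩ {N_t = n}. -/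
open MeasureTheory ProbabilityTheory Set

/-- The trace of a σ-algebra on a set `E`, viewed as a σ-algebra on the whole space:
`B` is measurable iff it agrees on `E` with some `m`-measurable set. -/
def traceMS {Ω : Type*} (E : Set Ω) (m : MeasurableSpace Ω) : MeasurableSpace Ω where
  MeasurableSet' B := ∃ C, MeasurableSet[m] C ∧ B ∩ E = C ∩ E
  measurableSet_empty := ⟨∅, MeasurableSet.empty, rfl⟩
  measurableSet_compl := by
    rintro B ⟨C, hC, hBC⟩
    refine ⟨Cᶜ, hC.compl, ?_⟩
    ext x
    constructor <;> rintro ⟨hx1, hx2⟩ <;> refine ⟨fun h => hx1 ?_, hx2⟩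
    · exact ((Set.ext_iff.mp hBC x).mpr ⟨h, hx2⟩).1
    · exact ((Set.ext_iff.mp hBC x).mp ⟨h, hx2⟩).1
  measurableSet_iUnion := by
    rintro f hf
    choose C hC hfC using hf
    refine ⟨⋃ i, C i, MeasurableSet.iUnion hC, ?_⟩
    rw [Set.iUnion_inter, Set.iUnion_inter]
    exact Set.iUnion_congr hfC

theorem measurableSet_traceMS {Ω : Type*} {E : Set Ω} {m : MeasurableSpace Ω} {B : Set Ω} :
    MeasurableSet[traceMS E m] B ↔ ∃ C, MeasurableSet[m] C ∧ B ∩ E = C ∩ E := Iff.rfl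

/-- Lemma 1: the trace of the natural filtration `F_t` of the
aggregate claims process on the event `{N_t = n}` coincides with the trace of
`σ(σ(W_1,…,W_n) ∪ σ(X_1,…,X_n))`. -/
theorem stmt_3 {Ω : Type*} [MeasurableSpace Ω]
    (W X : ℕ → Ω → ℝ)
    (hWm : ∀ n, Measurable (W n)) (hXm : ∀ n, Measurable (X n))
    (hWpos : ∀ n ω, 0 < W n ω) (hXpos : ∀ n ω, 0 < X n ω)
    (T : ℕ → Ω → ℝ) (hT : ∀ n ω, T n ω = ∑ k ∈ Finset.range n, W k ω)
    (hTunb : ∀ ω M, ∃ n, M < T n ω)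
    (N : ℝ → Ω → ℕ)
    (hN : ∀ t ω, 0 ≤ t → T (N t ω) ω ≤ t ∧ t < T (N t ω + 1) ω)
    (S : ℝ → Ω → ℝ) (hS : ∀ t ω, S t ω = ∑ k ∈ Finset.range (N t ω), X k ω)
    (F : ℝ → MeasurableSpace Ω)
    (hF : ∀ t, F t = ⨆ u ∈ Set.Icc (0 : ℝ) t, MeasurableSpace.comap (S u) inferInstance)
    (t : ℝ) (ht : 0 ≤ t) (n : ℕ) :
    {A : Set Ω | ∃ B : Set Ω, MeasurableSet[F t] B ∧ A = B ∩ {ω | N t ω = n}} =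
    {A : Set Ω | ∃ C : Set Ω,
      MeasurableSet[(⨆ j ∈ Finset.range n, MeasurableSpace.comap (W j) inferInstance) ⊔
        (⨆ j ∈ Finset.range n, MeasurableSpace.comap (X j) inferInstance)] C ∧
      A = C ∩ {ω | N t ω = n}} := by
  classical
  set E : Set Ω := {ω | N t ω = n} with hE
  set G : MeasurableSpace Ω :=
    (⨆ j ∈ Finset.range n, MeasurableSpace.comap (W j) inferInstance) ⊔
      (⨆ j ∈ Finset.range n, MeasurableSpace.comap (X j) inferInstance) with hG
  -- partial sums of claim sizes
  set V : ℕ → Ω → ℝ := fun m ω => ∑ k ∈ Finset.range m, X k ω with hV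
  -- basic monotonicity facts
  have hTmono : ∀ ω, StrictMono fun m => T m ω := by
    intro ω
    apply strictMono_nat_of_lt_succ
    intro m
    rw [hT, hT, Finset.sum_range_succ]
    exact lt_add_of_pos_right _ (hWpos m ω)
  have hVmono : ∀ ω, StrictMono fun m => V m ω := by
    intro ω
    apply strictMono_nat_of_lt_succ
    intro m
    simp only [hV, Finset.sum_range_succ]
    exact lt_add_of_pos_right _ (hXpos m ω)
  have hT0 : ∀ ω, T 0 ω = 0 := fun ω => by simp [hT]
  have hTnonneg : ∀ m ω, 0 ≤ T m ω := by
    intro m ω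
    rw [hT]
    exact Finset.sum_nonneg fun k _ => (hWpos k ω).le
  have hVnonneg : ∀ m ω, 0 ≤ V m ω :=
    fun m ω => Finset.sum_nonneg fun k _ => (hXpos k ω).le
  have hSnonneg : ∀ u ω, 0 ≤ S u ω := by
    intro u ω; rw [hS]; exact Finset.sum_nonneg fun k _ => (hXpos k ω).le
  -- characterization of N
  have hNiff : ∀ u ω, 0 ≤ u → ∀ m, (N u ω = m ↔ T m ω ≤ u ∧ u < T (m + 1) ω) := by
    intro u ω hu m
    constructor
    · rintro rfl; exact hN u ω hu
    · rintro ⟨h1, h2⟩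
      obtain ⟨h1', h2'⟩ := hN u ω hu
      by_contra hne
      rcases lt_or_gt_of_ne hne with h | h
      · -- N u ω < m : T (N u ω + 1) ≤ T m ≤ u contradicts u < T (N u ω + 1)
        have : T (N u ω + 1) ω ≤ T m ω := (hTmono ω).monotone (Nat.succ_le_of_lt h)
        exact absurd (this.trans h1) (not_le.mpr h2')
      · -- m < N u ω : T (m+1) ≤ T (N u ω) ≤ u contradicts u < T (m+1)
        have : T (m + 1) ω ≤ T (N u ω) ω := (hTmono ω).monotone (Nat.succ_le_of_lt h)
        exact absurd (this.trans h1') (not_le.mpr h2)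
  -- facts about the event E
  have hEt : ∀ ω ∈ E, T n ω ≤ t ∧ t < T (n + 1) ω := by
    intro ω hω
    have := hN t ω ht
    rwa [show N t ω = n from hω] at this
  have hNle : ∀ ω ∈ E, ∀ u, 0 ≤ u → u ≤ t → N u ω ≤ n := by
    intro ω hω u hu0 hut
    by_contra h
    have h1 : T (n + 1) ω ≤ T (N u ω) ω :=
      (hTmono ω).monotone (Nat.succ_le_of_lt (not_le.mp h))
    have h2 := (hN u ω hu0).1
    exact absurd ((h1.trans h2).trans hut) (not_le.mpr (hEt ω hω).2)
  -- G-measurability of the building blocks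
  have hWG : ∀ j < n, Measurable[G] (W j) := by
    intro j hj
    exact measurable_iff_comap_le.mpr
      (le_trans (le_iSup₂ (f := fun j (_ : j ∈ Finset.range n) =>
        MeasurableSpace.comap (W j) inferInstance) j (Finset.mem_range.mpr hj)) le_sup_left)
  have hXG : ∀ j < n, Measurable[G] (X j) := by
    intro j hj
    exact measurable_iff_comap_le.mpr
      (le_trans (le_iSup₂ (f := fun j (_ : j ∈ Finset.range n) =>
        MeasurableSpace.comap (X j) inferInstance) j (Finset.mem_range.mpr hj)) le_sup_right)
  have hTG : ∀ m, m ≤ n → Measurable[G] (T m) := by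
    intro m hm
    have : T m = fun ω => ∑ k ∈ Finset.range m, W k ω := funext fun ω => hT m ω
    rw [this]
    exact Finset.measurable_sum _ fun k hk =>
      hWG k (lt_of_lt_of_le (Finset.mem_range.mp hk) hm)
  have hVG : ∀ m, m ≤ n → Measurable[G] (V m) := by
    intro m hm
    exact Finset.measurable_sum _ fun k hk =>
      hXG k (lt_of_lt_of_le (Finset.mem_range.mp hk) hm)
  -- forward inclusion : F t ≤ trace of G on E
  have hforward : F t ≤ traceMS E G := by
    rw [hF]
    refine iSup₂_le fun u hu => ?_
    obtain ⟨hu0, hut⟩ := hu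
    intro A hA
    obtain ⟨s, hs, rfl⟩ := hA
    refine measurableSet_traceMS.mpr
      ⟨(⋃ m ∈ Finset.range n, (({ω | T m ω ≤ u} ∩ {ω | u < T (m + 1) ω}) ∩ V m ⁻¹' s)) ∪
        ({ω | T n ω ≤ u} ∩ V n ⁻¹' s), ?_, ?_⟩
    · refine MeasurableSet.union ?_ (MeasurableSet.inter (hTG n le_rfl measurableSet_Iic)
        (hVG n le_rfl hs))
      refine MeasurableSet.biUnion (Finset.range n).countable_toSet fun m hm => ?_
      have hm' := Finset.mem_range.mp hm
      exact MeasurableSet.inter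
        (MeasurableSet.inter (hTG m hm'.le measurableSet_Iic)
          (hTG (m + 1) hm' measurableSet_Ioi))
        (hVG m hm'.le hs)
    · ext ω
      simp only [Set.mem_inter_iff, Set.mem_union, Set.mem_iUnion, Set.mem_preimage,
        Set.mem_setOf_eq, Finset.mem_range, exists_prop]
      constructor
      · rintro ⟨hωs, hωE⟩
        refine ⟨?_, hωE⟩
        have hmle := hNle ω hωE u hu0 hut
        have hSu : S u ω = V (N u ω) ω := hS u ω
        rcases lt_or_eq_of_le hmle with h | h
        · exact Or.inl ⟨N u ω, h, ⟨(hN u ω hu0).1, (hN u ω hu0).2⟩, by rwa [← hSu]⟩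
        · refine Or.inr ⟨?_, by rwa [hSu, h] at hωs⟩
          have := (hN u ω hu0).1
          rwa [h] at this
      · rintro ⟨h, hωE⟩
        refine ⟨?_, hωE⟩
        rcases h with ⟨m, _, ⟨h1, h2⟩, hV⟩ | ⟨h1, hV⟩
        · have : N u ω = m := (hNiff u ω hu0 m).mpr ⟨h1, h2⟩
          rw [hS u ω, this]
          exact hV
        · have h2 : u < T (n + 1) ω := lt_of_le_of_lt hut (hEt ω hωE).2
          have : N u ω = n := (hNiff u ω hu0 n).mpr ⟨h1, h2⟩
          rw [hS u ω, this]
          exact hV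
  -- countable family of times in [0,t] : t itself and all rationals of [0,t]
  obtain ⟨r, hr⟩ := exists_surjective_nat ℚ
  set e : ℕ → ℝ := fun k =>
    if k = 0 then t else min t (max 0 ((r (k - 1) : ℚ) : ℝ)) with he
  have he0 : e 0 = t := by simp [he]
  have hemem : ∀ k, e k ∈ Set.Icc (0 : ℝ) t := by
    intro k
    by_cases hk : k = 0
    · simp [he, hk, ht]
    · simp only [he, hk, if_false]
      exact ⟨le_min ht (le_max_left _ _), min_le_left _ _⟩
  have herat : ∀ q : ℚ, (q : ℝ) ∈ Set.Icc (0 : ℝ) t → ∃ k, e k = q := by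
    intro q hq
    obtain ⟨k, rfl⟩ := hr q
    refine ⟨k + 1, ?_⟩
    simp only [he, Nat.add_sub_cancel, Nat.succ_ne_zero, if_false]
    rw [max_eq_right hq.1, min_eq_right hq.2]
  -- F t - measurability of S u for u ∈ [0,t]
  have hSFt : ∀ u, u ∈ Set.Icc (0 : ℝ) t → Measurable[F t] (S u) := by
    intro u hu
    rw [hF]
    exact measurable_iff_comap_le.mpr
      (le_iSup₂ (f := fun u (_ : u ∈ Set.Icc (0 : ℝ) t) =>
        MeasurableSpace.comap (S u) inferInstance) u hu)
  -- reconstructed jump values and jump times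
  set Vh : ℕ → Ω → ℝ := fun m => Nat.rec (fun _ => (0 : ℝ))
    (fun _ prev ω => ⨅ k, if prev ω < S (e k) ω then S (e k) ω else S t ω + 1) m with hVh
  have hVhsucc : ∀ m ω, Vh (m + 1) ω =
      ⨅ k, if Vh m ω < S (e k) ω then S (e k) ω else S t ω + 1 := fun m ω => rfl
  set Th : ℕ → Ω → ℝ := fun m ω => Nat.rec (0 : ℝ)
    (fun m _ => ⨅ k, if Vh m ω < S (e k) ω then e k else t) m with hTh
  have hThsucc : ∀ m ω, Th (m + 1) ω =
      ⨅ k, if Vh m ω < S (e k) ω then e k else t := fun m ω => rfl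
  have hVhF : ∀ m, Measurable[F t] (Vh m) := by
    intro m
    induction m with
    | zero => exact measurable_const
    | succ m ih =>
      have hrw : Vh (m + 1) =
          fun ω => ⨅ k, if Vh m ω < S (e k) ω then S (e k) ω else S t ω + 1 := rfl
      rw [hrw]
      refine Measurable.iInf fun k => Measurable.ite ?_ (hSFt _ (hemem k))
        ((hSFt t ⟨ht, le_rfl⟩).add measurable_const)
      exact measurableSet_lt ih (hSFt _ (hemem k))
  have hThF : ∀ m, Measurable[F t] (Th m) := by
    intro m
    cases m with
    | zero => exact measurable_const
    | succ m =>
      have hrw : Th (m + 1) = fun ω => ⨅ k, if Vh m ω < S (e k) ω then e k else t := rfl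
      rw [hrw]
      refine Measurable.iInf fun k => Measurable.ite ?_ measurable_const measurable_const
      exact measurableSet_lt (hVhF m) (hSFt _ (hemem k))
  -- value of S at the sample times
  have hkey : ∀ ω ∈ E, ∀ k, N (e k) ω ≤ n ∧ S (e k) ω = V (N (e k) ω) ω :=
    fun ω hω k => ⟨hNle ω hω _ (hemem k).1 (hemem k).2, hS _ ω⟩
  have hVlt : ∀ ω (m l : ℕ), V m ω < V l ω → m < l := by
    intro ω m l h
    by_contra hc
    exact absurd h (not_lt.mpr ((hVmono ω).monotone (not_lt.mp hc)))
  have hStV : ∀ ω ∈ E, S t ω = V n ω := by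
    intro ω hω
    rw [hS]
    rw [show N t ω = n from hω]
  -- every level l ≤ n is attained at some sample time
  have hattain : ∀ ω ∈ E, ∀ l, l ≤ n → ∃ k, N (e k) ω = l := by
    intro ω hω l hl
    rcases eq_or_lt_of_le hl with rfl | hl
    · exact ⟨0, by rw [he0]; exact hω⟩
    · have h1 : T l ω < T (l + 1) ω := hTmono ω (Nat.lt_succ_self l)
      have h2 : T (l + 1) ω ≤ t := le_trans ((hTmono ω).monotone (Nat.succ_le_of_lt hl)) (hEt ω hω).1
      obtain ⟨q, hq1, hq2⟩ := exists_rat_btwn h1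
      have hq0 : (0 : ℝ) ≤ q := le_trans (hTnonneg _ ω) hq1.le
      have hqt : (q : ℝ) ≤ t := le_trans hq2.le h2
      obtain ⟨k, hk⟩ := herat q ⟨hq0, hqt⟩
      refine ⟨k, (hNiff (e k) ω (by rw [hk]; exact hq0) l).mpr ?_⟩
      rw [hk]
      exact ⟨hq1.le, hq2⟩
  -- identification of Vh with V on E
  have hVhval : ∀ ω ∈ E, ∀ m, m ≤ n → Vh m ω = V m ω := by
    intro ω hω m
    induction m with
    | zero => intro _; simp [hVh, hV]
    | succ m ih =>
      intro hm
      have ihm := ih (Nat.le_of_succ_le hm)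
      rw [hVhsucc m ω]
      simp only [ihm]
      have hbdd : BddBelow (Set.range fun k =>
          if V m ω < S (e k) ω then S (e k) ω else S t ω + 1) := by
        refine ⟨0, ?_⟩
        rintro x ⟨k, rfl⟩
        dsimp only
        split_ifs
        · exact hSnonneg _ ω
        · exact add_nonneg (hSnonneg _ ω) zero_le_one
      apply le_antisymm
      · obtain ⟨k, hk⟩ := hattain ω hω (m + 1) hm
        have hSk : S (e k) ω = V (m + 1) ω := by rw [(hkey ω hω k).2, hk]
        refine ciInf_le_of_le hbdd k ?_
        rw [if_pos (by rw [hSk]; exact hVmono ω (Nat.lt_succ_self m))]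
        exact hSk.le
      · refine le_ciInf fun k => ?_
        split_ifs with h
        · obtain ⟨hl, hSl⟩ := hkey ω hω k
          rw [hSl] at h ⊢
          exact (hVmono ω).monotone (Nat.succ_le_of_lt (hVlt ω _ _ h))
        · rw [hStV ω hω]
          have := (hVmono ω).monotone hm
          linarith
  -- identification of Th with T on E
  have hThval : ∀ ω ∈ E, ∀ m, m ≤ n → Th m ω = T m ω := by
    intro ω hω m hm
    cases m with
    | zero => rw [hT0 ω]; rfl
    | succ m =>
      rw [hThsucc m ω]
      simp only [hVhval ω hω m (Nat.le_of_succ_le hm)]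
      have hbdd : BddBelow (Set.range fun k => if V m ω < S (e k) ω then e k else t) := by
        refine ⟨0, ?_⟩
        rintro x ⟨k, rfl⟩
        dsimp only
        split_ifs
        · exact (hemem k).1
        · exact ht
      have hub : ∀ k, T (m + 1) ω ≤ (if V m ω < S (e k) ω then e k else t) := by
        intro k
        split_ifs with h
        · obtain ⟨hl, hSl⟩ := hkey ω hω k
          rw [hSl] at h
          have h1 : T (m + 1) ω ≤ T (N (e k) ω) ω :=
            (hTmono ω).monotone (Nat.succ_le_of_lt (hVlt ω _ _ h))
          exact h1.trans (hN (e k) ω (hemem k).1).1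
        · exact le_trans ((hTmono ω).monotone hm) (hEt ω hω).1
      refine le_antisymm ?_ (le_ciInf hub)
      have hTt : T (m + 1) ω ≤ t := le_trans ((hTmono ω).monotone hm) (hEt ω hω).1
      rcases eq_or_lt_of_le hTt with heq | hlt
      · refine ciInf_le_of_le hbdd 0 ?_
        rw [he0, if_pos]
        · exact heq.ge
        · rw [hStV ω hω]
          exact hVmono ω (Nat.lt_of_lt_of_le (Nat.lt_succ_self m) hm)
      · refine le_of_forall_pos_le_add fun ε hε => ?_
        obtain ⟨q, hq1, hq2⟩ := exists_rat_btwn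
          (show T (m + 1) ω < min (T (m + 1) ω + ε) t from lt_min (lt_add_of_pos_right _ hε) hlt)
        have hq0 : (0 : ℝ) ≤ q := le_trans (hTnonneg _ ω) hq1.le
        have hqt : (q : ℝ) ≤ t := (lt_of_lt_of_le hq2 (min_le_right _ _)).le
        obtain ⟨k, hk⟩ := herat q ⟨hq0, hqt⟩
        have hcond : V m ω < S (e k) ω := by
          obtain ⟨hl, hSl⟩ := hkey ω hω k
          have hmlt : m + 1 ≤ N (e k) ω := by
            by_contra hc
            have h1 : N (e k) ω + 1 ≤ m + 1 := Nat.succ_le_of_lt (Nat.lt_of_not_le hc) |>.trans le_rfl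
            have h2 : e k < T (N (e k) ω + 1) ω := (hN (e k) ω (hemem k).1).2
            have h3 : T (N (e k) ω + 1) ω ≤ T (m + 1) ω := (hTmono ω).monotone h1
            have h4 : e k < T (m + 1) ω := h2.trans_le h3
            rw [hk] at h4
            exact absurd hq1 (not_lt.mpr h4.le)
          rw [hSl]
          exact lt_of_lt_of_le (hVmono ω (Nat.lt_succ_self m))
            ((hVmono ω).monotone hmlt)
        refine ciInf_le_of_le hbdd k ?_
        rw [if_pos hcond, hk]
        exact le_trans (lt_of_lt_of_le hq2 (min_le_left _ _)).le le_rfl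
  -- backward inclusion : G ≤ trace of F t on E
  have hbackward : G ≤ traceMS E (F t) := by
    rw [hG]
    refine sup_le (iSup₂_le fun j hj => ?_) (iSup₂_le fun j hj => ?_) <;>
      have hj' := Finset.mem_range.mp hj
    · intro A hA
      obtain ⟨s, hs, rfl⟩ := hA
      refine measurableSet_traceMS.mpr
        ⟨(fun ω => Th (j + 1) ω - Th j ω) ⁻¹' s, ((hThF (j + 1)).sub (hThF j)) hs, ?_⟩
      ext ω
      simp only [Set.mem_inter_iff, Set.mem_preimage]
      have hWj : ∀ hω : ω ∈ E, Th (j + 1) ω - Th j ω = W j ω := by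
        intro hω
        rw [hThval ω hω (j + 1) hj', hThval ω hω j hj'.le, hT, hT, Finset.sum_range_succ]
        ring
      constructor <;> rintro ⟨h1, h2⟩ <;> refine ⟨?_, h2⟩
      · rw [hWj h2]; exact h1
      · rw [hWj h2] at h1; exact h1
    · intro A hA
      obtain ⟨s, hs, rfl⟩ := hA
      refine measurableSet_traceMS.mpr
        ⟨(fun ω => Vh (j + 1) ω - Vh j ω) ⁻¹' s, ((hVhF (j + 1)).sub (hVhF j)) hs, ?_⟩
      ext ω
      simp only [Set.mem_inter_iff, Set.mem_preimage]
      have hXj : ∀ hω : ω ∈ E, Vh (j + 1) ω - Vh j ω = X j ω := by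
        intro hω
        rw [hVhval ω hω (j + 1) hj', hVhval ω hω j hj'.le]
        simp only [hV, Finset.sum_range_succ]
        ring
      constructor <;> rintro ⟨h1, h2⟩ <;> refine ⟨?_, h2⟩
      · rw [hXj h2]; exact h1
      · rw [hXj h2] at h1; exact h1
  -- conclusion
  ext A
  simp only [Set.mem_setOf_eq]
  constructor
  · rintro ⟨B, hB, rfl⟩
    obtain ⟨C, hC, hBC⟩ := hforward _ hB
    exact ⟨C, hC, hBC⟩
  · rintro ⟨C, hC, rfl⟩
    obtain ⟨B, hB, hCB⟩ := hbackward _ hC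
    exact ⟨B, hB, hCB⟩
end

section
/- Under the setting of a counting process N with zero probability of explosion, interarrival process W, claim size process X, and aggregate claims process S_t = Σ_{k=1}^{N_t} X_k with natural filtration (F_t), the terminal σ-algebra F_∞ := σ(⋃_{t≥0} F_t) equals σ(⋃_{n} σ(W_1,…,W_n) ∪ ⋃_n σ(X_1,…,X_n)), the σ-algebra generated jointly by all interarrival times and all claim sizes. -/
open MeasureTheory ProbabilityTheory Set

/-- If `f : Ω → ℕ` is measurable and each `G n` is measurable, then
`ω ↦ G (f ω) ω` is measurable. -/
lemma stmt4_meas_switch {Ω : Type*} {m : MeasurableSpace Ω} {f : Ω → ℕ}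
    (hf : Measurable f) {G : ℕ → Ω → ℝ} (hG : ∀ n, Measurable (G n)) :
    Measurable fun ω => G (f ω) ω := by
  intro s hs
  have h : (fun ω => G (f ω) ω) ⁻¹' s = ⋃ n, f ⁻¹' {n} ∩ G n ⁻¹' s := by
    ext ω
    simp only [Set.mem_preimage, Set.mem_iUnion, Set.mem_inter_iff, Set.mem_singleton_iff]
    constructor
    · intro h; exact ⟨f ω, rfl, h⟩
    · rintro ⟨n, rfl, h⟩; exact h
  rw [h]
  exact MeasurableSet.iUnion fun n => (hf (measurableSet_singleton n)).inter (hG n hs)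

/-- Lemma 3: the terminal σ-algebra `F_∞ = σ(⋃_{t≥0} F_t)` of the
aggregate claims process equals the σ-algebra generated by all interarrival
times and all claim sizes. -/
theorem stmt_4 {Ω : Type*} [MeasurableSpace Ω]
    (W X : ℕ → Ω → ℝ)
    (hWm : ∀ n, Measurable (W n)) (hXm : ∀ n, Measurable (X n))
    (hWpos : ∀ n ω, 0 < W n ω) (hXpos : ∀ n ω, 0 < X n ω)
    (T : ℕ → Ω → ℝ) (hT : ∀ n ω, T n ω = ∑ k ∈ Finset.range n, W k ω)
    (hTunb : ∀ ω M, ∃ n, M < T n ω)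
    (N : ℝ → Ω → ℕ)
    (hN : ∀ t ω, 0 ≤ t → T (N t ω) ω ≤ t ∧ t < T (N t ω + 1) ω)
    (S : ℝ → Ω → ℝ) (hS : ∀ t ω, S t ω = ∑ k ∈ Finset.range (N t ω), X k ω)
    (F : ℝ → MeasurableSpace Ω)
    (hF : ∀ t, F t = ⨆ u ∈ Set.Icc (0 : ℝ) t, MeasurableSpace.comap (S u) inferInstance) :
    (⨆ t ∈ Set.Ici (0 : ℝ), F t) =
      (⨆ n, MeasurableSpace.comap (W n) inferInstance) ⊔
        (⨆ n, MeasurableSpace.comap (X n) inferInstance) := by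
  classical
  set mT : MeasurableSpace Ω := ⨆ t ∈ Set.Ici (0 : ℝ), F t with hmT
  set mR : MeasurableSpace Ω :=
    (⨆ n, MeasurableSpace.comap (W n) inferInstance) ⊔
      (⨆ n, MeasurableSpace.comap (X n) inferInstance) with hmR
  -- the cumulated claim amounts
  set A : ℕ → Ω → ℝ := fun n ω => ∑ k ∈ Finset.range n, X k ω with hA
  -- basic monotonicity facts
  have hTsucc : ∀ n ω, T (n + 1) ω = T n ω + W n ω := by
    intro n ω; rw [hT, hT, Finset.sum_range_succ]
  have hAsucc : ∀ n ω, A (n + 1) ω = A n ω + X n ω := by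
    intro n ω; simp only [hA, Finset.sum_range_succ]
  have hTmono : ∀ ω, StrictMono fun n => T n ω := by
    intro ω
    apply strictMono_nat_of_lt_succ
    intro n
    rw [hTsucc]
    exact lt_add_of_pos_right _ (hWpos n ω)
  have hAmono : ∀ ω, StrictMono fun n => A n ω := by
    intro ω
    apply strictMono_nat_of_lt_succ
    intro n
    rw [hAsucc]
    exact lt_add_of_pos_right _ (hXpos n ω)
  have hT0 : ∀ n ω, 0 ≤ T n ω := by
    intro n ω; rw [hT]
    exact Finset.sum_nonneg fun k _ => (hWpos k ω).le
  have hA0 : ∀ n ω, 0 ≤ A n ω := by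
    intro n ω
    exact Finset.sum_nonneg fun k _ => (hXpos k ω).le
  -- S t ω = A (N t ω) ω
  have hSA : ∀ t ω, S t ω = A (N t ω) ω := fun t ω => hS t ω
  -- characterization of N via T
  have hNiff : ∀ (t : ℝ) ω (n : ℕ), 0 ≤ t → (T n ω ≤ t ↔ n ≤ N t ω) := by
    intro t ω n ht
    constructor
    · intro h
      have h2 : T n ω < T (N t ω + 1) ω := lt_of_le_of_lt h (hN t ω ht).2
      have := (hTmono ω).lt_iff_lt.mp h2
      omega
    · intro h
      exact le_trans ((hTmono ω).monotone h) (hN t ω ht).1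
  -- characterization of N via S
  have hSiff : ∀ (t : ℝ) ω (n : ℕ), 0 ≤ t → (A n ω ≤ S t ω ↔ n ≤ N t ω) := by
    intro t ω n ht
    rw [hSA]
    exact (hAmono ω).le_iff_le
  have hSiff' : ∀ (t : ℝ) ω (n : ℕ), 0 ≤ t → (A n ω < S t ω ↔ n < N t ω) := by
    intro t ω n ht
    rw [hSA]
    exact (hAmono ω).lt_iff_lt
  -- ============ direction mT ≤ mR ============
  have hWmR : ∀ n, Measurable[mR] (W n) :=
    fun n => (measurable_iff_comap_le.2 le_rfl).mono
      (le_trans (le_iSup (fun k => MeasurableSpace.comap (W k) inferInstance) n) le_sup_left)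
      le_rfl
  have hXmR : ∀ n, Measurable[mR] (X n) :=
    fun n => (measurable_iff_comap_le.2 le_rfl).mono
      (le_trans (le_iSup (fun k => MeasurableSpace.comap (X k) inferInstance) n) le_sup_right)
      le_rfl
  have hTmR : ∀ n, Measurable[mR] (T n) := by
    intro n
    have : T n = fun ω => ∑ k ∈ Finset.range n, W k ω := by
      funext ω; exact hT n ω
    rw [this]
    exact Finset.measurable_sum _ fun k _ => hWmR k
  have hAmR : ∀ n, Measurable[mR] (A n) := by
    intro n
    exact Finset.measurable_sum _ fun k _ => hXmR k
  have hNmR : ∀ u : ℝ, 0 ≤ u → Measurable[mR] (N u) := by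
    intro u hu
    apply measurable_to_countable'
    intro n
    have h : N u ⁻¹' {n} = {ω | T n ω ≤ u} ∩ {ω | ¬ T (n + 1) ω ≤ u} := by
      ext ω
      simp only [Set.mem_preimage, Set.mem_singleton_iff, Set.mem_inter_iff, Set.mem_setOf_eq]
      rw [hNiff u ω n hu, hNiff u ω (n + 1) hu]
      omega
    rw [h]
    exact (measurableSet_le (hTmR n) measurable_const).inter
      ((measurableSet_le (hTmR (n + 1)) measurable_const).compl)
  have hSmR : ∀ u : ℝ, 0 ≤ u → Measurable[mR] (S u) := by
    intro u hu
    have h : S u = fun ω => A (N u ω) ω := by funext ω; exact hSA u ω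
    rw [h]
    exact stmt4_meas_switch (hNmR u hu) hAmR
  -- ============ direction mR ≤ mT ============
  have hSmT : ∀ u : ℝ, 0 ≤ u → Measurable[mT] (S u) := by
    intro u hu
    apply measurable_iff_comap_le.2
    calc MeasurableSpace.comap (S u) inferInstance
        ≤ F u := by
          rw [hF u]
          exact le_iSup₂ (f := fun v (_ : v ∈ Set.Icc (0:ℝ) u) =>
            MeasurableSpace.comap (S v) inferInstance) u ⟨hu, le_rfl⟩
      _ ≤ mT := le_iSup₂ (f := fun t (_ : t ∈ Set.Ici (0:ℝ)) => F t) u hu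
  -- recover A n from S by induction
  have hAmT : ∀ n, Measurable[mT] (A n) := by
    intro n
    induction n with
    | zero =>
      have : A 0 = fun _ => (0 : ℝ) := by funext ω; simp [hA]
      rw [this]; exact measurable_const
    | succ n ih =>
      -- A (n+1) ω = (⨅ q : ℚ, if 0 ≤ q ∧ A n ω < S q ω then ofReal (S q ω) else ∞).toReal
      have key : ∀ ω, (⨅ q : ℚ,
          if 0 ≤ (q : ℝ) ∧ A n ω < S (q : ℝ) ω then ENNReal.ofReal (S (q : ℝ) ω) else ⊤)
          = ENNReal.ofReal (A (n + 1) ω) := by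
        intro ω
        apply le_antisymm
        · -- pick a rational in (T (n+1) ω, T (n+2) ω)
          obtain ⟨q, hq1, hq2⟩ := exists_rat_btwn (hTmono ω (Nat.lt_succ_self (n + 1)))
          have hq0 : (0 : ℝ) ≤ q := le_of_lt (lt_of_le_of_lt (hT0 (n + 1) ω) hq1)
          have hNq1 : n + 1 ≤ N (q : ℝ) ω := (hNiff q ω (n + 1) hq0).1 hq1.le
          have hNq2 : N (q : ℝ) ω < n + 2 := by
            by_contra h
            push_neg at h
            exact absurd ((hNiff q ω (n + 2) hq0).2 h) (not_le.2 hq2)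
          have hNeq : N (q : ℝ) ω = n + 1 := by omega
          have hcond : 0 ≤ (q : ℝ) ∧ A n ω < S (q : ℝ) ω := by
            refine ⟨hq0, ?_⟩
            rw [hSiff' q ω n hq0]
            omega
          have hval : S (q : ℝ) ω = A (n + 1) ω := by rw [hSA, hNeq]
          calc (⨅ q : ℚ, if 0 ≤ (q : ℝ) ∧ A n ω < S (q : ℝ) ω
                then ENNReal.ofReal (S (q : ℝ) ω) else ⊤)
              ≤ if 0 ≤ (q : ℝ) ∧ A n ω < S (q : ℝ) ω
                then ENNReal.ofReal (S (q : ℝ) ω) else ⊤ := iInf_le _ q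
            _ = ENNReal.ofReal (A (n + 1) ω) := by rw [if_pos hcond, hval]
        · apply le_iInf
          intro q
          by_cases hcond : 0 ≤ (q : ℝ) ∧ A n ω < S (q : ℝ) ω
          · rw [if_pos hcond]
            apply ENNReal.ofReal_le_ofReal
            have : n + 1 ≤ N (q : ℝ) ω := (hSiff' q ω n hcond.1).1 hcond.2
            rw [hSA]
            exact (hAmono ω).monotone this
          · rw [if_neg hcond]; exact le_top
      have heq : A (n + 1) = fun ω => (⨅ q : ℚ,
          if 0 ≤ (q : ℝ) ∧ A n ω < S (q : ℝ) ω then ENNReal.ofReal (S (q : ℝ) ω) else ⊤).toReal := by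
        funext ω
        rw [key ω, ENNReal.toReal_ofReal (hA0 (n + 1) ω)]
      rw [heq]
      apply ENNReal.measurable_toReal.comp
      apply Measurable.iInf
      intro q
      by_cases hq : 0 ≤ (q : ℝ)
      · have h1 : (fun ω => if 0 ≤ (q : ℝ) ∧ A n ω < S (q : ℝ) ω
            then ENNReal.ofReal (S (q : ℝ) ω) else ⊤)
            = fun ω => if A n ω < S (q : ℝ) ω then ENNReal.ofReal (S (q : ℝ) ω) else ⊤ := by
          funext ω; simp [hq]
        rw [h1]
        exact Measurable.ite (measurableSet_lt ih (hSmT q hq))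
          ((hSmT q hq).ennreal_ofReal) measurable_const
      · have h1 : (fun ω => if 0 ≤ (q : ℝ) ∧ A n ω < S (q : ℝ) ω
            then ENNReal.ofReal (S (q : ℝ) ω) else ⊤) = fun _ => (⊤ : ENNReal) := by
          funext ω; simp [hq]
        rw [h1]
        exact measurable_const
  -- recover T n from S and A n
  have hTmT : ∀ n, Measurable[mT] (T n) := by
    intro n
    have key : ∀ ω, (⨅ q : ℚ,
        if 0 ≤ (q : ℝ) ∧ A n ω ≤ S (q : ℝ) ω then ENNReal.ofReal (q : ℝ) else ⊤)
        = ENNReal.ofReal (T n ω) := by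
      intro ω
      apply le_antisymm
      · apply ENNReal.le_of_forall_pos_le_add
        intro ε hε _
        obtain ⟨q, hq1, hq2⟩ := exists_rat_btwn (lt_add_of_pos_right (T n ω) (by exact_mod_cast hε))
        have hq0 : (0 : ℝ) ≤ q := le_of_lt (lt_of_le_of_lt (hT0 n ω) hq1)
        have hcond : 0 ≤ (q : ℝ) ∧ A n ω ≤ S (q : ℝ) ω := by
          refine ⟨hq0, ?_⟩
          rw [hSiff q ω n hq0]
          exact (hNiff q ω n hq0).1 hq1.le
        calc (⨅ q : ℚ, if 0 ≤ (q : ℝ) ∧ A n ω ≤ S (q : ℝ) ω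
              then ENNReal.ofReal (q : ℝ) else ⊤)
            ≤ if 0 ≤ (q : ℝ) ∧ A n ω ≤ S (q : ℝ) ω
              then ENNReal.ofReal (q : ℝ) else ⊤ := iInf_le _ q
          _ = ENNReal.ofReal (q : ℝ) := if_pos hcond
          _ ≤ ENNReal.ofReal (T n ω + (ε : ℝ)) := ENNReal.ofReal_le_ofReal hq2.le
          _ ≤ ENNReal.ofReal (T n ω) + (ε : ENNReal) := by
              rw [ENNReal.ofReal_add (hT0 n ω) (by positivity)]
              simp
      · apply le_iInf
        intro q
        by_cases hcond : 0 ≤ (q : ℝ) ∧ A n ω ≤ S (q : ℝ) ω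
        · rw [if_pos hcond]
          apply ENNReal.ofReal_le_ofReal
          have hn : n ≤ N (q : ℝ) ω := (hSiff q ω n hcond.1).1 hcond.2
          exact le_trans ((hTmono ω).monotone hn) (hN (q : ℝ) ω hcond.1).1
        · rw [if_neg hcond]; exact le_top
    have heq : T n = fun ω => (⨅ q : ℚ,
        if 0 ≤ (q : ℝ) ∧ A n ω ≤ S (q : ℝ) ω then ENNReal.ofReal (q : ℝ) else ⊤).toReal := by
      funext ω
      rw [key ω, ENNReal.toReal_ofReal (hT0 n ω)]
    rw [heq]
    apply ENNReal.measurable_toReal.comp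
    apply Measurable.iInf
    intro q
    by_cases hq : 0 ≤ (q : ℝ)
    · have h1 : (fun ω => if 0 ≤ (q : ℝ) ∧ A n ω ≤ S (q : ℝ) ω
          then ENNReal.ofReal (q : ℝ) else ⊤)
          = fun ω => if A n ω ≤ S (q : ℝ) ω then ENNReal.ofReal (q : ℝ) else ⊤ := by
        funext ω; simp [hq]
      rw [h1]
      exact Measurable.ite (measurableSet_le (hAmT n) (hSmT q hq))
        measurable_const measurable_const
    · have h1 : (fun ω => if 0 ≤ (q : ℝ) ∧ A n ω ≤ S (q : ℝ) ω
          then ENNReal.ofReal (q : ℝ) else ⊤) = fun _ => (⊤ : ENNReal) := by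
        funext ω; simp [hq]
      rw [h1]
      exact measurable_const
  have hWmT : ∀ n, Measurable[mT] (W n) := by
    intro n
    have h : W n = fun ω => T (n + 1) ω - T n ω := by
      funext ω
      rw [hTsucc]; ring
    rw [h]
    exact (hTmT (n + 1)).sub (hTmT n)
  have hXmT : ∀ n, Measurable[mT] (X n) := by
    intro n
    have h : X n = fun ω => A (n + 1) ω - A n ω := by
      funext ω
      rw [hAsucc]; ring
    rw [h]
    exact (hAmT (n + 1)).sub (hAmT n)
  -- ============ conclusion ============
  apply le_antisymm
  · apply iSup₂_le
    intro t ht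
    rw [hF t]
    apply iSup₂_le
    intro u hu
    exact (hSmR u hu.1).comap_le
  · apply sup_le
    · exact iSup_le fun n => (hWmT n).comap_le
    · exact iSup_le fun n => (hXmT n).comap_le
end

section
/- Let S be a compound renewal process under both P and Q (i.e., under each measure the interarrival times W are i.i.d., the claim sizes X are i.i.d., and W, X are independent), and let F_∞ be the terminal σ-algebra of S. Then the following are equivalent: (i) P and Q are equivalent on F_∞; (ii) P_{X_1} = Q_{X_1} and P_{W_1} = Q_{W_1}; (iii) P and Q coincide on F_∞. -/
open MeasureTheory ProbabilityTheory Set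

open Classical in
/-- Recovery of the cumulated claims `∑_{k<n} X k` from the path of `S`. -/
noncomputable def crpXi {Ω : Type*} (S : ℝ → Ω → ℝ) : ℕ → Ω → ENNReal
  | 0 => fun _ => 0
  | n+1 => fun ω => ⨅ q : ℚ, if 0 ≤ q ∧ crpXi S n ω < ENNReal.ofReal (S q ω) then
      ENNReal.ofReal (S q ω) else ⊤

open Classical in
/-- Recovery of the renewal times `T n` from the path of `S`. -/
noncomputable def crpT {Ω : Type*} (S : ℝ → Ω → ℝ) (n : ℕ) (ω : Ω) : ENNReal :=
  ⨅ q : ℚ, if 0 ≤ q ∧ crpXi S n ω ≤ ENNReal.ofReal (S q ω) then ENNReal.ofReal (q : ℝ) else ⊤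

lemma crp_meas_sum {Ω : Type*} {m : MeasurableSpace Ω} {g : Ω → ℕ} (hg : Measurable[m] g)
    {f : ℕ → Ω → ℝ} (hf : ∀ n, Measurable[m] (f n)) :
    Measurable[m] (fun ω => ∑ k ∈ Finset.range (g ω), f k ω) := by
  intro s hs
  have h : (fun ω => ∑ k ∈ Finset.range (g ω), f k ω) ⁻¹' s
      = ⋃ n, (g ⁻¹' {n}) ∩ ((fun ω => ∑ k ∈ Finset.range n, f k ω) ⁻¹' s) := by
    ext ω
    simp only [mem_preimage, mem_iUnion, mem_inter_iff, mem_singleton_iff]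
    constructor
    · intro h; exact ⟨g ω, rfl, h⟩
    · rintro ⟨n, rfl, h⟩; exact h
  rw [h]
  exact MeasurableSet.iUnion fun n =>
    (hg (measurableSet_singleton n)).inter
      (Finset.measurable_sum (Finset.range n) (fun k _ => hf k) hs)

/-- From mutual absolute continuity on a sub-σ-algebra w.r.t. which the i.i.d. sequence is
measurable, deduce equality of the laws, via the strong law of large numbers. -/
lemma crp_law_eq {Ω : Type*} {m : MeasurableSpace Ω} [m0 : MeasurableSpace Ω] (hm : m ≤ m0)
    (P Q : Measure Ω) [IsProbabilityMeasure P] [IsProbabilityMeasure Q]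
    (Y : ℕ → Ω → ℝ) (hYm : ∀ n, Measurable (Y n)) (hYm' : ∀ n, Measurable[m] (Y n))
    (hPind : iIndepFun Y P)
    (hPid : ∀ n, P.map (Y n) = P.map (Y 0))
    (hQind : iIndepFun Y Q)
    (hQid : ∀ n, Q.map (Y n) = Q.map (Y 0))
    (hnull : ∀ A : Set Ω, MeasurableSet[m] A → (P A = 0 ↔ Q A = 0)) :
    P.map (Y 0) = Q.map (Y 0) := by
  have hPY : IsProbabilityMeasure (P.map (Y 0)) := Measure.isProbabilityMeasure_map (hYm 0).aemeasurable
  have hQY : IsProbabilityMeasure (Q.map (Y 0)) := Measure.isProbabilityMeasure_map (hYm 0).aemeasurable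
  ext B hB
  set f : ℝ → ℝ := B.indicator (fun _ => (1 : ℝ)) with hfdef
  have hf : Measurable f := measurable_const.indicator hB
  have hfb : ∀ x, ‖f x‖ ≤ 1 := by
    intro x
    by_cases hx : x ∈ B <;> simp [hfdef, Set.indicator_apply, hx]
  set g : ℕ → Ω → ℝ := fun k => f ∘ Y k with hgdef
  have key : ∀ (μ : Measure Ω), IsProbabilityMeasure μ →
      iIndepFun Y μ → (∀ n, μ.map (Y n) = μ.map (Y 0)) →
      ∀ᵐ ω ∂μ, Filter.Tendsto (fun n : ℕ => (∑ i ∈ Finset.range n, g i ω) / n)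
        Filter.atTop (nhds ((μ.map (Y 0)) B).toReal) := by
    intro μ hμ hind hid
    have hident : ∀ i, IdentDistrib (g i) (g 0) μ μ := by
      intro i
      have h1 : IdentDistrib (Y i) (Y 0) μ μ :=
        ⟨(hYm i).aemeasurable, (hYm 0).aemeasurable, hid i⟩
      exact h1.comp hf
    have hcomp : iIndepFun g μ :=
      hind.comp (fun _ => f) (fun _ => hf)
    have hindep : Pairwise (Function.onFun (IndepFun · · μ) g) := fun i j hij => hcomp.indepFun hij
    have hgm : ∀ i, Measurable (g i) := fun i => hf.comp (hYm i)
    have hint : Integrable (g 0) μ := by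
      refine (integrable_const (1 : ℝ)).mono' (hgm 0).aestronglyMeasurable ?_
      exact Filter.Eventually.of_forall fun ω => hfb _
    have hexp : μ[g 0] = ((μ.map (Y 0)) B).toReal := by
      have h1 : ∫ ω, g 0 ω ∂μ = ∫ x, f x ∂(μ.map (Y 0)) :=
        (integral_map (hYm 0).aemeasurable hf.aestronglyMeasurable).symm
      rw [show μ[g 0] = ∫ ω, g 0 ω ∂μ from rfl, h1, hfdef,
        integral_indicator_const (1 : ℝ) hB, smul_eq_mul, mul_one, measureReal_def]
    have := strong_law_ae_real g hint hindep hident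
    rwa [hexp] at this
  set cP := ((P.map (Y 0)) B).toReal with hcP
  set cQ := ((Q.map (Y 0)) B).toReal with hcQ
  set E : ℝ → Set Ω := fun c => {ω | Filter.Tendsto
    (fun n : ℕ => (∑ i ∈ Finset.range n, g i ω) / n) Filter.atTop (nhds c)} with hE
  have hEm : ∀ c, MeasurableSet[m] (E c) := by
    intro c
    refine measurableSet_tendsto (nhds c) (fun n => ?_)
    exact ((Finset.measurable_sum (Finset.range n) (fun i _ => hf.comp (hYm' i)))).div_const _
  have hP1 : P (E cP)ᶜ = 0 := by
    have h := key P inferInstance hPind hPid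
    rw [ae_iff] at h
    exact h
  have hQ2 : Q (E cQ)ᶜ = 0 := by
    have h := key Q inferInstance hQind hQid
    rw [ae_iff] at h
    exact h
  have hQ1 : Q (E cP)ᶜ = 0 := (hnull _ (hEm cP).compl).1 hP1
  have hne : (E cP ∩ E cQ).Nonempty := by
    rw [Set.nonempty_iff_ne_empty]
    intro hempty
    have h2 : Q ((E cP) ∩ (E cQ))ᶜ = 0 := by
      rw [Set.compl_inter]
      exact le_antisymm (le_trans (measure_union_le _ _) (by rw [hQ1, hQ2]; simp)) zero_le
    rw [hempty, Set.compl_empty] at h2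
    simpa [h2] using (measure_univ (μ := Q))
  obtain ⟨ω, hω1, hω2⟩ := hne
  have hcc : cP = cQ := tendsto_nhds_unique hω1 hω2
  have h1 : (P.map (Y 0)) B ≠ ⊤ := measure_ne_top _ _
  have h2 : (Q.map (Y 0)) B ≠ ⊤ := measure_ne_top _ _
  rw [← ENNReal.ofReal_toReal h1, ← ENNReal.ofReal_toReal h2, ← hcP, ← hcQ, hcc]

theorem stmt_6_aux {Ω : Type*} (mF GW GX : MeasurableSpace Ω) [MeasurableSpace Ω]
    (P Q : Measure Ω) [IsProbabilityMeasure P] [IsProbabilityMeasure Q]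
    (W X : ℕ → Ω → ℝ)
    (hWm : ∀ n, Measurable (W n)) (hXm : ∀ n, Measurable (X n))
    (hWpos : ∀ n ω, 0 < W n ω) (hXpos : ∀ n ω, 0 < X n ω)
    (hPWind : iIndepFun W P)
    (hPWid : ∀ n, P.map (W n) = P.map (W 0))
    (hPXind : iIndepFun X P)
    (hPXid : ∀ n, P.map (X n) = P.map (X 0))
    (hPindep : Indep GW GX P)
    (hQWind : iIndepFun W Q)
    (hQWid : ∀ n, Q.map (W n) = Q.map (W 0))
    (hQXind : iIndepFun X Q)
    (hQXid : ∀ n, Q.map (X n) = Q.map (X 0))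
    (hQindep : Indep GW GX Q)
    (T : ℕ → Ω → ℝ) (hT : ∀ n ω, T n ω = ∑ k ∈ Finset.range n, W k ω)
    (N : ℝ → Ω → ℕ)
    (hN : ∀ t ω, 0 ≤ t → T (N t ω) ω ≤ t ∧ t < T (N t ω + 1) ω)
    (S : ℝ → Ω → ℝ) (hS : ∀ t ω, S t ω = ∑ k ∈ Finset.range (N t ω), X k ω)
    (F : ℝ → MeasurableSpace Ω)
    (hF : ∀ t, F t = ⨆ u ∈ Set.Icc (0 : ℝ) t, MeasurableSpace.comap (S u) inferInstance)
    (hmF : mF = ⨆ t ∈ Set.Ici (0 : ℝ), F t)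
    (hGWdef : GW = ⨆ n, MeasurableSpace.comap (W n) inferInstance)
    (hGXdef : GX = ⨆ n, MeasurableSpace.comap (X n) inferInstance)
    :
    ((∀ A : Set Ω, MeasurableSet[mF] A → (P A = 0 ↔ Q A = 0)) ↔
      (P.map (X 0) = Q.map (X 0) ∧ P.map (W 0) = Q.map (W 0))) ∧
    ((P.map (X 0) = Q.map (X 0) ∧ P.map (W 0) = Q.map (W 0)) ↔
      (∀ A : Set Ω, MeasurableSet[mF] A → P A = Q A)) := by
  set Xi : ℕ → Ω → ℝ := fun n ω => ∑ k ∈ Finset.range n, X k ω with hXidef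
  -- basic facts about T
  have hTnn : ∀ n ω, 0 ≤ T n ω := fun n ω => by
    rw [hT]; exact Finset.sum_nonneg fun k _ => (hWpos k ω).le
  have hTsucc : ∀ n ω, T (n + 1) ω = T n ω + W n ω := fun n ω => by
    rw [hT, hT, Finset.sum_range_succ]
  have hTsm : ∀ ω, StrictMono fun n => T n ω := fun ω =>
    strictMono_nat_of_lt_succ fun n => by rw [hTsucc]; linarith [hWpos n ω]
  -- basic facts about Xi
  have hXisucc : ∀ n ω, Xi (n + 1) ω = Xi n ω + X n ω := fun n ω => by
    simp only [hXidef, Finset.sum_range_succ]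
  have hXism : ∀ ω, StrictMono fun n => Xi n ω := fun ω =>
    strictMono_nat_of_lt_succ fun n => by rw [hXisucc]; linarith [hXpos n ω]
  have hXinn : ∀ n ω, 0 ≤ Xi n ω := fun n ω =>
    Finset.sum_nonneg fun k _ => (hXpos k ω).le
  have hXipos : ∀ n ω, 0 < Xi (n + 1) ω := fun n ω => by
    have h := hXism ω (Nat.succ_pos n)
    simpa [hXidef] using h
  -- uniqueness of N
  have hNuniq : ∀ (t : ℝ) ω n, 0 ≤ t → T n ω ≤ t → t < T (n + 1) ω → N t ω = n := by
    intro t ω n ht h1 h2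
    obtain ⟨h3, h4⟩ := hN t ω ht
    by_contra hne
    rcases lt_or_gt_of_ne hne with h | h
    · have hle : T (N t ω + 1) ω ≤ T n ω := (hTsm ω).monotone (Nat.succ_le_of_lt h)
      linarith
    · have hle : T (n + 1) ω ≤ T (N t ω) ω := (hTsm ω).monotone (Nat.succ_le_of_lt h)
      linarith
  have hNle : ∀ (t : ℝ) ω n, 0 ≤ t → (n ≤ N t ω ↔ T n ω ≤ t) := by
    intro t ω n ht
    constructor
    · intro h
      exact le_trans ((hTsm ω).monotone h) (hN t ω ht).1
    · intro h
      by_contra hcon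
      push_neg at hcon
      have : T (N t ω + 1) ω ≤ T n ω := (hTsm ω).monotone (Nat.succ_le_of_lt hcon)
      linarith [(hN t ω ht).2]
  have hSXi : ∀ (t : ℝ) ω, S t ω = Xi (N t ω) ω := fun t ω => hS t ω
  have hSnn : ∀ (t : ℝ) ω, 0 ≤ S t ω := fun t ω => by rw [hSXi]; exact hXinn _ ω
  have hSle : ∀ n (q : ℝ) ω, 0 ≤ q → (Xi n ω ≤ S q ω ↔ T n ω ≤ q) := by
    intro n q ω hq
    rw [hSXi, (hXism ω).le_iff_le, hNle q ω n hq]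
  have hSlt : ∀ n (q : ℝ) ω, 0 ≤ q → (Xi n ω < S q ω ↔ T (n + 1) ω ≤ q) := by
    intro n q ω hq
    rw [hSXi, (hXism ω).lt_iff_lt, ← Nat.succ_le_iff, hNle q ω (n + 1) hq]
  have hqex : ∀ n ω, ∃ q : ℚ, T n ω ≤ q ∧ (q : ℝ) < T (n + 1) ω := by
    intro n ω
    obtain ⟨q, hq1, hq2⟩ := exists_rat_btwn (hTsm ω (lt_add_one n))
    exact ⟨q, hq1.le, hq2⟩
  have hSq : ∀ n (q : ℚ) ω, T n ω ≤ q → (q : ℝ) < T (n + 1) ω → S (q : ℝ) ω = Xi n ω := by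
    intro n q ω h1 h2
    rw [hSXi, hNuniq (q : ℝ) ω n (le_trans (hTnn n ω) h1) h1 h2]
  -- correctness of the recovery of Xi
  have hxi : ∀ n ω, crpXi S n ω = ENNReal.ofReal (Xi n ω) := by
    intro n ω
    induction n with
    | zero => simp [crpXi, hXidef]
    | succ n ih =>
      apply le_antisymm
      · obtain ⟨q, hq1, hq2⟩ := hqex (n + 1) ω
        have hq0 : (0 : ℝ) ≤ q := le_trans (hTnn _ ω) hq1
        have hSqv : S (q : ℝ) ω = Xi (n + 1) ω := hSq _ q ω hq1 hq2
        have hcond : 0 ≤ q ∧ crpXi S n ω < ENNReal.ofReal (S (q : ℝ) ω) := by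
          refine ⟨by exact_mod_cast hq0, ?_⟩
          rw [ih, hSqv]
          exact (ENNReal.ofReal_lt_ofReal_iff (hXipos n ω)).2 (hXism ω (lt_add_one n))
        refine le_trans (iInf_le _ q) ?_
        rw [if_pos hcond, hSqv]
      · refine le_iInf fun q => ?_
        by_cases hc : 0 ≤ q ∧ crpXi S n ω < ENNReal.ofReal (S (q : ℝ) ω)
        · rw [if_pos hc]
          have hq0 : (0 : ℝ) ≤ q := by exact_mod_cast hc.1
          have hlt : Xi n ω < S (q : ℝ) ω := by
            by_contra hle
            push_neg at hle
            have h2 := hc.2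
            rw [ih] at h2
            exact absurd (ENNReal.ofReal_le_ofReal hle) (not_le.2 h2)
          have hTle : T (n + 1) ω ≤ q := (hSlt n q ω hq0).1 hlt
          exact ENNReal.ofReal_le_ofReal ((hSle (n + 1) q ω hq0).2 hTle)
        · rw [if_neg hc]; exact le_top
  -- correctness of the recovery of T
  have htj : ∀ n ω, crpT S n ω = ENNReal.ofReal (T n ω) := by
    intro n ω
    apply le_antisymm
    · refine ENNReal.le_of_forall_pos_le_add fun ε hε _ => ?_
      have hεR : (0 : ℝ) < ε := by exact_mod_cast hε
      obtain ⟨q, hq1, hq2⟩ := exists_rat_btwn (lt_add_of_pos_right (T n ω) hεR)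
      have hq0 : (0 : ℝ) ≤ q := le_trans (hTnn n ω) hq1.le
      have hcond : 0 ≤ q ∧ crpXi S n ω ≤ ENNReal.ofReal (S (q : ℝ) ω) := by
        refine ⟨by exact_mod_cast hq0, ?_⟩
        rw [hxi]
        exact ENNReal.ofReal_le_ofReal ((hSle n q ω hq0).2 hq1.le)
      refine le_trans (iInf_le _ q) ?_
      rw [if_pos hcond]
      calc ENNReal.ofReal (q : ℝ) ≤ ENNReal.ofReal (T n ω + ε) :=
            ENNReal.ofReal_le_ofReal hq2.le
        _ ≤ ENNReal.ofReal (T n ω) + ENNReal.ofReal (ε : ℝ) := ENNReal.ofReal_add_le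
        _ = ENNReal.ofReal (T n ω) + ε := by rw [ENNReal.ofReal_coe_nnreal]
    · refine le_iInf fun q => ?_
      by_cases hc : 0 ≤ q ∧ crpXi S n ω ≤ ENNReal.ofReal (S (q : ℝ) ω)
      · rw [if_pos hc]
        have hq0 : (0 : ℝ) ≤ q := by exact_mod_cast hc.1
        have h2 := hc.2
        rw [hxi] at h2
        have hle : Xi n ω ≤ S (q : ℝ) ω :=
          (ENNReal.ofReal_le_ofReal_iff (hSnn _ ω)).1 h2
        exact ENNReal.ofReal_le_ofReal ((hSle n q ω hq0).1 hle)
      · rw [if_neg hc]; exact le_top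
  -- measurability w.r.t. mF
  have hSmm : ∀ u : ℝ, 0 ≤ u → Measurable[mF] (S u) := by
    intro u hu
    have h2 : F u ≤ mF := by
      rw [hmF]
      exact le_iSup₂ (f := fun t (_ : t ∈ Set.Ici (0:ℝ)) => F t) u hu
    have h1 : MeasurableSpace.comap (S u) inferInstance ≤ F u := by
      rw [hF]
      exact le_iSup₂ (f := fun v (_ : v ∈ Set.Icc (0:ℝ) u) => MeasurableSpace.comap (S v) inferInstance) u ⟨hu, le_rfl⟩
    exact Measurable.of_comap_le (h1.trans h2)
  have hxim : ∀ n, Measurable[mF] (crpXi S n) := by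
    intro n
    induction n with
    | zero =>
      have : crpXi S 0 = fun _ : Ω => (0 : ENNReal) := rfl
      rw [this]; exact measurable_const
    | succ n ih =>
      have : crpXi S (n + 1) = fun ω => ⨅ q : ℚ,
          if 0 ≤ q ∧ crpXi S n ω < ENNReal.ofReal (S (q : ℝ) ω) then
            ENNReal.ofReal (S (q : ℝ) ω) else ⊤ := rfl
      rw [this]
      refine Measurable.iInf fun q => ?_
      by_cases h0 : (0 : ℚ) ≤ q
      · have hfun : (fun ω => if 0 ≤ q ∧ crpXi S n ω < ENNReal.ofReal (S (q : ℝ) ω) then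
            ENNReal.ofReal (S (q : ℝ) ω) else ⊤)
            = fun ω => if crpXi S n ω < ENNReal.ofReal (S (q : ℝ) ω) then
              ENNReal.ofReal (S (q : ℝ) ω) else ⊤ := by
          funext ω; simp [h0]
        have hSq : Measurable[mF] (S (q : ℝ)) := hSmm (q : ℝ) (by exact_mod_cast h0)
        rw [hfun]
        exact Measurable.ite (measurableSet_lt ih (ENNReal.measurable_ofReal.comp hSq))
          (ENNReal.measurable_ofReal.comp hSq) measurable_const
      · have hfun : (fun ω => if 0 ≤ q ∧ crpXi S n ω < ENNReal.ofReal (S (q : ℝ) ω) then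
            ENNReal.ofReal (S (q : ℝ) ω) else ⊤) = fun _ : Ω => (⊤ : ENNReal) := by
          funext ω; simp [h0]
        rw [hfun]; exact measurable_const
  have htjm : ∀ n, Measurable[mF] (crpT S n) := by
    intro n
    refine Measurable.iInf fun q => ?_
    by_cases h0 : (0 : ℚ) ≤ q
    · have hSq : Measurable[mF] (S (q : ℝ)) := hSmm (q : ℝ) (by exact_mod_cast h0)
      have hfun : (fun ω => if 0 ≤ q ∧ crpXi S n ω ≤ ENNReal.ofReal (S (q : ℝ) ω) then
          ENNReal.ofReal (q : ℝ) else ⊤)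
          = fun ω => if crpXi S n ω ≤ ENNReal.ofReal (S (q : ℝ) ω) then
            ENNReal.ofReal (q : ℝ) else ⊤ := by
        funext ω; simp [h0]
      rw [hfun]
      exact Measurable.ite (measurableSet_le (hxim n) (ENNReal.measurable_ofReal.comp hSq))
        measurable_const measurable_const
    · have hfun : (fun ω => if 0 ≤ q ∧ crpXi S n ω ≤ ENNReal.ofReal (S (q : ℝ) ω) then
          ENNReal.ofReal (q : ℝ) else ⊤) = fun _ : Ω => (⊤ : ENNReal) := by
        funext ω; simp [h0]
      rw [hfun]; exact measurable_const
  have hXm' : ∀ n, Measurable[mF] (X n) := by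
    intro n
    have hrec : X n = fun ω => (crpXi S (n + 1) ω).toReal - (crpXi S n ω).toReal := by
      funext ω
      rw [hxi, hxi, ENNReal.toReal_ofReal (hXinn _ ω), ENNReal.toReal_ofReal (hXinn _ ω)]
      have := hXisucc n ω
      linarith
    rw [hrec]
    exact ((hxim (n + 1)).ennreal_toReal).sub ((hxim n).ennreal_toReal)
  have hWm' : ∀ n, Measurable[mF] (W n) := by
    intro n
    have hrec : W n = fun ω => (crpT S (n + 1) ω).toReal - (crpT S n ω).toReal := by
      funext ω
      rw [htj, htj, ENNReal.toReal_ofReal (hTnn _ ω), ENNReal.toReal_ofReal (hTnn _ ω)]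
      have := hTsucc n ω
      linarith
    rw [hrec]
    exact ((htjm (n + 1)).ennreal_toReal).sub ((htjm n).ennreal_toReal)
  -- measurability of N and S w.r.t. any sub-σ-algebra making W (resp. W and X) measurable
  have hNm : ∀ (m : MeasurableSpace Ω), (∀ k, Measurable[m] (W k)) →
      ∀ u : ℝ, 0 ≤ u → Measurable[m] (N u) := by
    intro m hW u hu
    have hTm : ∀ n, Measurable[m] fun ω => T n ω := by
      intro n
      have : (fun ω => T n ω) = fun ω => ∑ k ∈ Finset.range n, W k ω := by
        funext ω; exact hT n ω
      rw [this]
      exact Finset.measurable_sum (Finset.range n) fun k _ => hW k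
    refine measurable_to_countable' fun n => ?_
    have hpre : N u ⁻¹' {n} = {ω | T n ω ≤ u} ∩ {ω | u < T (n + 1) ω} := by
      ext ω
      simp only [mem_preimage, mem_singleton_iff, mem_inter_iff, mem_setOf_eq]
      constructor
      · rintro rfl; exact hN u ω hu
      · rintro ⟨h1, h2⟩; exact hNuniq u ω n hu h1 h2
    rw [hpre]
    exact (measurableSet_le (hTm n) measurable_const).inter
      (measurableSet_lt measurable_const (hTm (n + 1)))
  have hSm : ∀ (m : MeasurableSpace Ω), (∀ k, Measurable[m] (W k)) →
      (∀ k, Measurable[m] (X k)) → ∀ u : ℝ, 0 ≤ u → Measurable[m] (S u) := by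
    intro m hW hX u hu
    have : S u = fun ω => ∑ k ∈ Finset.range (N u ω), X k ω := funext fun ω => hS u ω
    rw [this]
    exact crp_meas_sum (hNm m hW u hu) hX
  have hmFa : mF ≤ (inferInstance : MeasurableSpace Ω) := by
    rw [hmF]
    refine iSup₂_le fun t ht => ?_
    rw [hF]
    refine iSup₂_le fun u hu => ?_
    exact (hSm _ hWm hXm u hu.1).comap_le
  -- direction (i) → (ii)
  have dirA : (∀ A : Set Ω, MeasurableSet[mF] A → (P A = 0 ↔ Q A = 0)) →
      (P.map (X 0) = Q.map (X 0) ∧ P.map (W 0) = Q.map (W 0)) := by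
    intro h
    exact ⟨crp_law_eq hmFa P Q X hXm hXm' hPXind hPXid hQXind hQXid h,
           crp_law_eq hmFa P Q W hWm hWm' hPWind hPWid hQWind hQWid h⟩
  -- direction (ii) → (iii)
  have dirB : (P.map (X 0) = Q.map (X 0) ∧ P.map (W 0) = Q.map (W 0)) →
      ∀ A : Set Ω, MeasurableSet[mF] A → P A = Q A := by
    rintro ⟨hX0, hW0⟩ A hA
    set CW : Set (Set Ω) := piiUnionInter
      (fun n => {s | MeasurableSet[MeasurableSpace.comap (W n) inferInstance] s})
      Set.univ with hCWdef
    set CX : Set (Set Ω) := piiUnionInter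
      (fun n => {s | MeasurableSet[MeasurableSpace.comap (X n) inferInstance] s})
      Set.univ with hCXdef
    have hgenCW : MeasurableSpace.generateFrom CW = GW := by
      rw [hCWdef, hGWdef, ← iSup_univ]
      exact generateFrom_piiUnionInter_measurableSet
        (fun n => MeasurableSpace.comap (W n) inferInstance) Set.univ
    have hgenCX : MeasurableSpace.generateFrom CX = GX := by
      rw [hCXdef, hGXdef, ← iSup_univ]
      exact generateFrom_piiUnionInter_measurableSet
        (fun n => MeasurableSpace.comap (X n) inferInstance) Set.univ
    have hCWpi : IsPiSystem CW :=
      isPiSystem_piiUnionInter _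
        (fun n => @MeasurableSpace.isPiSystem_measurableSet Ω
          (MeasurableSpace.comap (W n) inferInstance)) Set.univ
    have hCXpi : IsPiSystem CX :=
      isPiSystem_piiUnionInter _
        (fun n => @MeasurableSpace.isPiSystem_measurableSet Ω
          (MeasurableSpace.comap (X n) inferInstance)) Set.univ
    have hunivCW : Set.univ ∈ CW := ⟨∅, by simp, fun _ => Set.univ, by simp, by simp⟩
    have hunivCX : Set.univ ∈ CX := ⟨∅, by simp, fun _ => Set.univ, by simp, by simp⟩
    set C : Set (Set Ω) := Set.image2 (· ∩ ·) CW CX with hCdef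
    have hCpi : IsPiSystem C := by
      rintro _ ⟨a, ha, b, hb, rfl⟩ _ ⟨a', ha', b', hb', rfl⟩ hne
      have hcomm : a ∩ b ∩ (a' ∩ b') = (a ∩ a') ∩ (b ∩ b') := by
        ext x; simp only [mem_inter_iff]; tauto
      rw [hcomm] at hne ⊢
      exact ⟨a ∩ a', hCWpi a ha a' ha' (hne.mono Set.inter_subset_left),
        b ∩ b', hCXpi b hb b' hb' (hne.mono Set.inter_subset_right), rfl⟩
    have hgen : GW ⊔ GX = MeasurableSpace.generateFrom C := by
      apply le_antisymm
      · refine sup_le ?_ ?_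
        · rw [← hgenCW]
          refine MeasurableSpace.generateFrom_mono fun a ha => ?_
          exact ⟨a, ha, Set.univ, hunivCX, Set.inter_univ a⟩
        · rw [← hgenCX]
          refine MeasurableSpace.generateFrom_mono fun b hb => ?_
          exact ⟨Set.univ, hunivCW, b, hb, Set.univ_inter b⟩
      · refine MeasurableSpace.generateFrom_le ?_
        rintro _ ⟨a, ha, b, hb, rfl⟩
        have h1 : MeasurableSet[GW ⊔ GX] a :=
          ((le_sup_left : GW ≤ GW ⊔ GX)) a (hgenCW ▸ MeasurableSpace.measurableSet_generateFrom ha)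
        have h2 : MeasurableSet[GW ⊔ GX] b :=
          ((le_sup_right : GX ≤ GW ⊔ GX)) b (hgenCX ▸ MeasurableSpace.measurableSet_generateFrom hb)
        exact h1.inter h2
    have hGle : GW ⊔ GX ≤ (inferInstance : MeasurableSpace Ω) := by
      refine sup_le ?_ ?_
      · rw [hGWdef]; exact iSup_le fun n => (hWm n).comap_le
      · rw [hGXdef]; exact iSup_le fun n => (hXm n).comap_le
    have hWmG : ∀ k, Measurable[GW ⊔ GX] (W k) := by
      intro k
      refine Measurable.of_comap_le (le_trans ?_ (le_sup_left : GW ≤ GW ⊔ GX))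
      rw [hGWdef]
      exact le_iSup (fun n => MeasurableSpace.comap (W n) inferInstance) k
    have hXmG : ∀ k, Measurable[GW ⊔ GX] (X k) := by
      intro k
      refine Measurable.of_comap_le (le_trans ?_ (le_sup_right : GX ≤ GW ⊔ GX))
      rw [hGXdef]
      exact le_iSup (fun n => MeasurableSpace.comap (X n) inferInstance) k
    have hmFG : mF ≤ GW ⊔ GX := by
      rw [hmF]
      refine iSup₂_le fun t ht => ?_
      rw [hF]
      refine iSup₂_le fun u hu => ?_
      exact (hSm _ hWmG hXmG u hu.1).comap_le
    have hC : ∀ s ∈ C, P s = Q s := by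
      rintro _ ⟨a, ha, b, hb, rfl⟩
      have haGW : MeasurableSet[GW] a := hgenCW ▸ MeasurableSpace.measurableSet_generateFrom ha
      have hbGX : MeasurableSet[GX] b := hgenCX ▸ MeasurableSpace.measurableSet_generateFrom hb
      have hPab : P (a ∩ b) = P a * P b :=
        ((Indep_iff GW GX P).1 hPindep) a b haGW hbGX
      have hQab : Q (a ∩ b) = Q a * Q b :=
        ((Indep_iff GW GX Q).1 hQindep) a b haGW hbGX
      have hPQa : P a = Q a := by
        obtain ⟨s, -, f, hf, rfl⟩ := ha
        have hPprod := (ProbabilityTheory.iIndepSets_iff _ _).1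
          (ProbabilityTheory.iIndep.iIndepSets' hPWind) s hf
        have hQprod := (ProbabilityTheory.iIndepSets_iff _ _).1
          (ProbabilityTheory.iIndep.iIndepSets' hQWind) s hf
        rw [hPprod, hQprod]
        refine Finset.prod_congr rfl fun i hi => ?_
        obtain ⟨B, hB, hpre⟩ := hf i hi
        rw [← hpre, ← Measure.map_apply (hWm i) hB, ← Measure.map_apply (hWm i) hB,
          hPWid i, hQWid i, hW0]
      have hPQb : P b = Q b := by
        obtain ⟨s, -, f, hf, rfl⟩ := hb
        have hPprod := (ProbabilityTheory.iIndepSets_iff _ _).1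
          (ProbabilityTheory.iIndep.iIndepSets' hPXind) s hf
        have hQprod := (ProbabilityTheory.iIndepSets_iff _ _).1
          (ProbabilityTheory.iIndep.iIndepSets' hQXind) s hf
        rw [hPprod, hQprod]
        refine Finset.prod_congr rfl fun i hi => ?_
        obtain ⟨B, hB, hpre⟩ := hf i hi
        rw [← hpre, ← Measure.map_apply (hXm i) hB, ← Measure.map_apply (hXm i) hB,
          hPXid i, hQXid i, hX0]
      rw [hPab, hQab, hPQa, hPQb]
    exact ext_on_measurableSpace_of_generate_finite _ C hC hGle hgen hCpi
      (by simp) (hmFG A hA)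
  refine ⟨⟨dirA, fun h A hA => ?_⟩, ⟨dirB, fun h => dirA fun A hA => ?_⟩⟩
  · rw [dirB h A hA]
  · rw [h A hA]

/-- for a process `S` which is a compound renewal process under
both `P` and `Q`, the following are equivalent: (i) `P ∼ Q` on `F_∞`,
(ii) `P_{X_1} = Q_{X_1}` and `P_{W_1} = Q_{W_1}`, (iii) `P = Q` on `F_∞`. -/
theorem stmt_6 {Ω : Type*} [MeasurableSpace Ω]
    (P Q : Measure Ω) [IsProbabilityMeasure P] [IsProbabilityMeasure Q]
    (W X : ℕ → Ω → ℝ)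
    (hWm : ∀ n, Measurable (W n)) (hXm : ∀ n, Measurable (X n))
    (hWpos : ∀ n ω, 0 < W n ω) (hXpos : ∀ n ω, 0 < X n ω)
    -- compound renewal process under P
    (hPWind : iIndepFun W P)
    (hPWid : ∀ n, P.map (W n) = P.map (W 0))
    (hPXind : iIndepFun X P)
    (hPXid : ∀ n, P.map (X n) = P.map (X 0))
    (hPindep : Indep (⨆ n, MeasurableSpace.comap (W n) inferInstance)
      (⨆ n, MeasurableSpace.comap (X n) inferInstance) P)
    -- compound renewal process under Q
    (hQWind : iIndepFun W Q)
    (hQWid : ∀ n, Q.map (W n) = Q.map (W 0))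
    (hQXind : iIndepFun X Q)
    (hQXid : ∀ n, Q.map (X n) = Q.map (X 0))
    (hQindep : Indep (⨆ n, MeasurableSpace.comap (W n) inferInstance)
      (⨆ n, MeasurableSpace.comap (X n) inferInstance) Q)
    -- renewal structure and aggregate claims process
    (T : ℕ → Ω → ℝ) (hT : ∀ n ω, T n ω = ∑ k ∈ Finset.range n, W k ω)
    (hTunb : ∀ ω M, ∃ n, M < T n ω)
    (N : ℝ → Ω → ℕ)
    (hN : ∀ t ω, 0 ≤ t → T (N t ω) ω ≤ t ∧ t < T (N t ω + 1) ω)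
    (S : ℝ → Ω → ℝ) (hS : ∀ t ω, S t ω = ∑ k ∈ Finset.range (N t ω), X k ω)
    (F : ℝ → MeasurableSpace Ω)
    (hF : ∀ t, F t = ⨆ u ∈ Set.Icc (0 : ℝ) t, MeasurableSpace.comap (S u) inferInstance)
    :
    ((∀ A : Set Ω, MeasurableSet[⨆ t ∈ Set.Ici (0 : ℝ), F t] A → (P A = 0 ↔ Q A = 0)) ↔
      (P.map (X 0) = Q.map (X 0) ∧ P.map (W 0) = Q.map (W 0))) ∧
    ((P.map (X 0) = Q.map (X 0) ∧ P.map (W 0) = Q.map (W 0)) ↔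
      (∀ A : Set Ω, MeasurableSet[⨆ t ∈ Set.Ici (0 : ℝ), F t] A → P A = Q A)) := by
  exact stmt_6_aux _ _ _ P Q W X hWm hXm hWpos hXpos hPWind hPWid hPXind hPXid hPindep
    hQWind hQWid hQXind hQXid hQindep T hT N hN S hS F hF rfl rfl rfl
end

section
/- Let S be a compound renewal process under both P and Q on a common space with terminal σ-algebra F_∞. If P and Q do not coincide on F_∞, then P and Q are mutually singular on F_∞. In particular, two distinct compound-renewal laws for S are either identical or singular on F_∞ (a dichotomy). -/
open MeasureTheory ProbabilityTheory Set

section Aux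

variable {Ω : Type*}

/-- Characterization of the renewal counting process. -/
lemma renewal_N_eq [mΩ : MeasurableSpace Ω]
    (W : ℕ → Ω → ℝ) (hWpos : ∀ n ω, 0 < W n ω)
    (T : ℕ → Ω → ℝ) (hT : ∀ n ω, T n ω = ∑ k ∈ Finset.range n, W k ω)
    (N : ℝ → Ω → ℕ)
    (hN : ∀ t ω, 0 ≤ t → T (N t ω) ω ≤ t ∧ t < T (N t ω + 1) ω)
    {u : ℝ} (hu : 0 ≤ u) (ω : Ω) {n : ℕ}
    (h1 : T n ω ≤ u) (h2 : u < T (n+1) ω) : N u ω = n := by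
  have hTsm : StrictMono (fun n => T n ω) :=
    strictMono_nat_of_lt_succ (fun n => by
      simp only [hT, Finset.sum_range_succ]
      exact lt_add_of_pos_right _ (hWpos n ω))
  obtain ⟨g1, g2⟩ := hN u ω hu
  by_contra hne
  rcases Nat.lt_or_ge (N u ω) n with h | h
  · have : T (N u ω + 1) ω ≤ T n ω := hTsm.monotone (Nat.succ_le_of_lt h)
    linarith
  · have h' : n < N u ω := lt_of_le_of_ne h (Ne.symm hne)
    have : T (n+1) ω ≤ T (N u ω) ω := hTsm.monotone (Nat.succ_le_of_lt h')
    linarith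

/-- The aggregate process `S` is measurable with respect to any σ-algebra making all
the `W n` and `X n` measurable. -/
lemma renewal_S_measurable [mΩ : MeasurableSpace Ω]
    (W X : ℕ → Ω → ℝ)
    (hWm : ∀ n, Measurable (W n)) (hXm : ∀ n, Measurable (X n))
    (hWpos : ∀ n ω, 0 < W n ω)
    (T : ℕ → Ω → ℝ) (hT : ∀ n ω, T n ω = ∑ k ∈ Finset.range n, W k ω)
    (N : ℝ → Ω → ℕ)
    (hN : ∀ t ω, 0 ≤ t → T (N t ω) ω ≤ t ∧ t < T (N t ω + 1) ω)
    (S : ℝ → Ω → ℝ) (hS : ∀ t ω, S t ω = ∑ k ∈ Finset.range (N t ω), X k ω)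
    {u : ℝ} (hu : 0 ≤ u) : Measurable (S u) := by
  have hTm : ∀ n, Measurable (T n) := by
    intro n
    have : T n = fun ω => ∑ k ∈ Finset.range n, W k ω := funext fun ω => hT n ω
    rw [this]
    exact Finset.measurable_sum _ fun k _ => hWm k
  have hAm : ∀ n, Measurable (fun ω => ∑ k ∈ Finset.range n, X k ω) := fun n =>
    Finset.measurable_sum _ fun k _ => hXm k
  have hNm : Measurable (N u) := by
    apply measurable_to_countable'
    intro n
    have : (N u) ⁻¹' {n} = {ω | T n ω ≤ u} ∩ {ω | u < T (n+1) ω} := by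
      ext ω
      simp only [mem_preimage, mem_singleton_iff, mem_inter_iff, mem_setOf_eq]
      constructor
      · rintro rfl; exact hN u ω hu
      · rintro ⟨h1, h2⟩; exact renewal_N_eq W hWpos T hT N hN hu ω h1 h2
    rw [this]
    exact (measurableSet_le (hTm n) measurable_const).inter
      (measurableSet_lt measurable_const (hTm (n+1)))
  intro s hs
  have : (S u) ⁻¹' s
      = ⋃ n : ℕ, ((N u) ⁻¹' {n}) ∩ ((fun ω => ∑ k ∈ Finset.range n, X k ω) ⁻¹' s) := by
    ext ω
    simp only [mem_preimage, mem_iUnion, mem_inter_iff, mem_singleton_iff]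
    constructor
    · intro h; exact ⟨N u ω, rfl, by rw [← hS]; exact h⟩
    · rintro ⟨n, hn, h⟩; rw [hS, hn]; exact h
  rw [this]
  exact MeasurableSet.iUnion fun n =>
    (hNm (measurableSet_singleton n)).inter (hAm n hs)

/-- Reconstruction: the interarrival times and claim sizes are measurable with respect to
any σ-algebra making all the `S u`, `u ≥ 0`, measurable. -/
lemma renewal_recon [mΩ : MeasurableSpace Ω]
    (W X : ℕ → Ω → ℝ)
    (hWpos : ∀ n ω, 0 < W n ω) (hXpos : ∀ n ω, 0 < X n ω)
    (T : ℕ → Ω → ℝ) (hT : ∀ n ω, T n ω = ∑ k ∈ Finset.range n, W k ω)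
    (N : ℝ → Ω → ℕ)
    (hN : ∀ t ω, 0 ≤ t → T (N t ω) ω ≤ t ∧ t < T (N t ω + 1) ω)
    (S : ℝ → Ω → ℝ) (hS : ∀ t ω, S t ω = ∑ k ∈ Finset.range (N t ω), X k ω)
    (hSmeas : ∀ u : ℝ, 0 ≤ u → Measurable (S u)) :
    (∀ n, Measurable (W n)) ∧ (∀ n, Measurable (X n)) := by
  set A : ℕ → Ω → ℝ := fun n ω => ∑ k ∈ Finset.range n, X k ω with hA
  have hTsm : ∀ ω, StrictMono (fun n => T n ω) := fun ω =>
    strictMono_nat_of_lt_succ (fun n => by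
      simp only [hT, Finset.sum_range_succ]
      exact lt_add_of_pos_right _ (hWpos n ω))
  have hAsm : ∀ ω, StrictMono (fun n => A n ω) := fun ω =>
    strictMono_nat_of_lt_succ (fun n => by
      simp only [hA, Finset.sum_range_succ]
      exact lt_add_of_pos_right _ (hXpos n ω))
  have hT0 : ∀ n ω, 0 ≤ T n ω := fun n ω => by
    rw [hT]; exact Finset.sum_nonneg fun k _ => (hWpos k ω).le
  have hSA : ∀ u ω, S u ω = A (N u ω) ω := fun u ω => hS u ω
  have key : ∀ (u : ℝ) (ω : Ω), 0 ≤ u → ∀ n, (A n ω ≤ S u ω ↔ T n ω ≤ u) := by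
    intro u ω hu n
    obtain ⟨h1, h2⟩ := hN u ω hu
    rw [hSA]
    constructor
    · intro h
      have hn : n ≤ N u ω := (hAsm ω).le_iff_le.1 h
      exact le_trans ((hTsm ω).monotone hn) h1
    · intro h
      have hn : n < N u ω + 1 := (hTsm ω).lt_iff_lt.1 (lt_of_le_of_lt h h2)
      exact (hAsm ω).monotone (Nat.lt_succ_iff.1 hn)
  have hAm : ∀ n, Measurable (A n) := by
    intro n
    induction n with
    | zero =>
        have : A 0 = fun _ => (0:ℝ) := by funext ω; simp [hA]
        rw [this]; exact measurable_const
    | succ n ih =>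
        apply measurable_of_Iio
        intro c
        have hset : (A (n+1)) ⁻¹' (Iio c)
            = ⋃ (q : ℚ), ⋃ (_ : 0 ≤ (q:ℝ)),
                ({ω | A n ω < S (q:ℝ) ω} ∩ {ω | S (q:ℝ) ω < c}) := by
          ext ω
          simp only [mem_preimage, mem_Iio, mem_iUnion, mem_inter_iff, mem_setOf_eq]
          constructor
          · intro h
            obtain ⟨q, hq1, hq2⟩ := exists_rat_btwn ((hTsm ω) (Nat.lt_succ_self (n+1)))
            have hq0 : (0:ℝ) ≤ q := le_of_lt (lt_of_le_of_lt (hT0 (n+1) ω) hq1)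
            have hNq : N (q:ℝ) ω = n+1 :=
              renewal_N_eq W hWpos T hT N hN hq0 ω hq1.le hq2
            refine ⟨q, hq0, ?_, ?_⟩
            · rw [hSA, hNq]; exact hAsm ω (Nat.lt_succ_self n)
            · rw [hSA, hNq]; exact h
          · rintro ⟨q, hq0, h1, h2⟩
            have hlt : n < N (q:ℝ) ω := by
              have h1' : A n ω < A (N (q:ℝ) ω) ω := by rw [← hSA]; exact h1
              exact (hAsm ω).lt_iff_lt.1 h1'
            have hle : A (n+1) ω ≤ A (N (q:ℝ) ω) ω := (hAsm ω).monotone hlt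
            calc A (n+1) ω ≤ A (N (q:ℝ) ω) ω := hle
              _ = S (q:ℝ) ω := (hSA _ ω).symm
              _ < c := h2
        rw [hset]
        exact MeasurableSet.iUnion fun q => MeasurableSet.iUnion fun hq =>
          (measurableSet_lt ih (hSmeas _ hq)).inter
            (measurableSet_lt (hSmeas _ hq) measurable_const)
  have hTm : ∀ n, Measurable (T n) := by
    intro n
    apply measurable_of_Iio
    intro c
    have hset : (T n) ⁻¹' (Iio c)
        = ⋃ (q : ℚ), ⋃ (_ : 0 ≤ (q:ℝ) ∧ (q:ℝ) < c), {ω | A n ω ≤ S (q:ℝ) ω} := by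
      ext ω
      simp only [mem_preimage, mem_Iio, mem_iUnion, mem_setOf_eq]
      constructor
      · intro h
        obtain ⟨q, hq1, hq2⟩ := exists_rat_btwn h
        have hq0 : (0:ℝ) ≤ q := le_trans (hT0 n ω) hq1.le
        exact ⟨q, ⟨hq0, hq2⟩, (key (q:ℝ) ω hq0 n).2 hq1.le⟩
      · rintro ⟨q, ⟨hq0, hqc⟩, h⟩
        exact lt_of_le_of_lt ((key (q:ℝ) ω hq0 n).1 h) hqc
    rw [hset]
    exact MeasurableSet.iUnion fun q => MeasurableSet.iUnion fun hq =>
      measurableSet_le (hAm n) (hSmeas _ hq.1)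
  constructor
  · intro n
    have : W n = fun ω => T (n+1) ω - T n ω := by
      funext ω; rw [hT, hT, Finset.sum_range_succ]; ring
    rw [this]; exact (hTm (n+1)).sub (hTm n)
  · intro n
    have : X n = fun ω => A (n+1) ω - A n ω := by
      funext ω; simp only [hA, Finset.sum_range_succ]; ring_nf
    rw [this]; exact (hAm (n+1)).sub (hAm n)

/-- Equality on the π-system of cylinder sets of an i.i.d.-type family with equal marginals. -/
lemma pi_val [mΩ : MeasurableSpace Ω] (P Q : Measure Ω)
    (V : ℕ → Ω → ℝ) (hVm : ∀ n, Measurable (V n))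
    (hPind : iIndepFun V P)
    (hQind : iIndepFun V Q)
    (hPid : ∀ n, P.map (V n) = P.map (V 0))
    (hQid : ∀ n, Q.map (V n) = Q.map (V 0))
    (h0 : P.map (V 0) = Q.map (V 0)) :
    ∀ a ∈ piiUnionInter
      (fun n => {s | MeasurableSet[MeasurableSpace.comap (V n) inferInstance] s})
      (univ : Set ℕ), P a = Q a := by
  rintro a ⟨t, -, f, hf, rfl⟩
  choose B hBm hBeq using fun (i : ℕ) (hi : i ∈ t) =>
    (hf i hi : ∃ s', MeasurableSet s' ∧ V i ⁻¹' s' = f i)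
  classical
  set sets : ℕ → Set ℝ := fun i => if h : i ∈ t then B i h else univ with hsets
  have hms : ∀ i ∈ t, MeasurableSet (sets i) := by
    intro i hi; simp only [hsets, dif_pos hi]; exact hBm i hi
  have hfeq : ∀ i ∈ t, f i = V i ⁻¹' sets i := by
    intro i hi; simp only [hsets, dif_pos hi]; exact (hBeq i hi).symm
  have hre : ⋂ x ∈ t, f x = ⋂ x ∈ t, V x ⁻¹' sets x := by
    apply Set.iInter₂_congr; exact hfeq
  rw [hre]
  rw [hPind.measure_inter_preimage_eq_mul t (fun i hi => hms i hi),
    hQind.measure_inter_preimage_eq_mul t (fun i hi => hms i hi)]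
  refine Finset.prod_congr rfl fun i hi => ?_
  rw [← Measure.map_apply (hVm i) (hms i hi), ← Measure.map_apply (hVm i) (hms i hi),
    hPid i, hQid i, h0]

/-- Measures agreeing on a π-system agree on the generated σ-algebra. -/
lemma measure_eq_on_generateFrom {Ω : Type*} [mΩ : MeasurableSpace Ω] (P Q : Measure Ω)
    [IsProbabilityMeasure P] [IsProbabilityMeasure Q]
    {PS : Set (Set Ω)} (hpi : IsPiSystem PS)
    (hle : MeasurableSpace.generateFrom PS ≤ mΩ)
    (hbasic : ∀ t ∈ PS, P t = Q t) :
    ∀ A : Set Ω, MeasurableSet[MeasurableSpace.generateFrom PS] A → P A = Q A := by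
  intro A hA
  refine MeasurableSpace.induction_on_inter (m := MeasurableSpace.generateFrom PS)
    (C := fun A _ => P A = Q A) rfl hpi ?_ hbasic ?_ ?_ A hA
  · simp
  · intro t htG hPQ
    have ht' : MeasurableSet t := hle t htG
    rw [measure_compl ht' (measure_ne_top _ _), measure_compl ht' (measure_ne_top _ _),
      hPQ, measure_univ, measure_univ]
  · intro f hdisj hmeas hPQ
    rw [measure_iUnion hdisj (fun i => hle _ (hmeas i)),
      measure_iUnion hdisj (fun i => hle _ (hmeas i))]
    exact tsum_congr hPQ

/-- Case 1: if the marginal laws agree, the two measures agree on the σ-algebra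
generated by the two families. -/
lemma eq_on_sup {Ω : Type*} [mΩ : MeasurableSpace Ω] (P Q : Measure Ω)
    [IsProbabilityMeasure P] [IsProbabilityMeasure Q]
    (W X : ℕ → Ω → ℝ) (hWm : ∀ n, Measurable (W n)) (hXm : ∀ n, Measurable (X n))
    (hPWind : iIndepFun W P)
    (hPWid : ∀ n, P.map (W n) = P.map (W 0))
    (hPXind : iIndepFun X P)
    (hPXid : ∀ n, P.map (X n) = P.map (X 0))
    (hPindep : Indep (⨆ n, MeasurableSpace.comap (W n) inferInstance)
      (⨆ n, MeasurableSpace.comap (X n) inferInstance) P)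
    (hQWind : iIndepFun W Q)
    (hQWid : ∀ n, Q.map (W n) = Q.map (W 0))
    (hQXind : iIndepFun X Q)
    (hQXid : ∀ n, Q.map (X n) = Q.map (X 0))
    (hQindep : Indep (⨆ n, MeasurableSpace.comap (W n) inferInstance)
      (⨆ n, MeasurableSpace.comap (X n) inferInstance) Q)
    (hW0 : P.map (W 0) = Q.map (W 0)) (hX0 : P.map (X 0) = Q.map (X 0)) :
    ∀ A : Set Ω, MeasurableSet[(⨆ n, MeasurableSpace.comap (W n) inferInstance)
      ⊔ (⨆ n, MeasurableSpace.comap (X n) inferInstance)] A → P A = Q A := by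
  classical
  set πW : Set (Set Ω) := piiUnionInter
    (fun n => {s | MeasurableSet[MeasurableSpace.comap (W n) inferInstance] s})
    (univ : Set ℕ) with hπW
  set πX : Set (Set Ω) := piiUnionInter
    (fun n => {s | MeasurableSet[MeasurableSpace.comap (X n) inferInstance] s})
    (univ : Set ℕ) with hπX
  have hgenW : MeasurableSpace.generateFrom πW
      = ⨆ n, MeasurableSpace.comap (W n) inferInstance := by
    rw [hπW]
    have h := generateFrom_piiUnionInter_measurableSet
      (fun n => MeasurableSpace.comap (W n) inferInstance) (univ : Set ℕ)
    rwa [iSup_univ] at h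
  have hgenX : MeasurableSpace.generateFrom πX
      = ⨆ n, MeasurableSpace.comap (X n) inferInstance := by
    rw [hπX]
    have h := generateFrom_piiUnionInter_measurableSet
      (fun n => MeasurableSpace.comap (X n) inferInstance) (univ : Set ℕ)
    rwa [iSup_univ] at h
  have measW : ∀ a ∈ πW,
      MeasurableSet[⨆ n, MeasurableSpace.comap (W n) inferInstance] a := fun a ha => by
    have := measurableSet_iSup_of_mem_piiUnionInter
      (fun n => MeasurableSpace.comap (W n) inferInstance) univ a ha
    rwa [iSup_univ] at this
  have measX : ∀ a ∈ πX,
      MeasurableSet[⨆ n, MeasurableSpace.comap (X n) inferInstance] a := fun a ha => by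
    have := measurableSet_iSup_of_mem_piiUnionInter
      (fun n => MeasurableSpace.comap (X n) inferInstance) univ a ha
    rwa [iSup_univ] at this
  have hunivW : univ ∈ πW := ⟨∅, by simp, fun _ => univ, by simp, by simp⟩
  have hunivX : univ ∈ πX := ⟨∅, by simp, fun _ => univ, by simp, by simp⟩
  set PS : Set (Set Ω) := {A | ∃ a ∈ πW, ∃ b ∈ πX, A = a ∩ b} with hPS
  have hpiW : IsPiSystem πW := isPiSystem_piiUnionInter _
    (fun n => @MeasurableSpace.isPiSystem_measurableSet Ω (MeasurableSpace.comap (W n) inferInstance)) _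
  have hpiX : IsPiSystem πX := isPiSystem_piiUnionInter _
    (fun n => @MeasurableSpace.isPiSystem_measurableSet Ω (MeasurableSpace.comap (X n) inferInstance)) _
  have hpi : IsPiSystem PS := by
    rintro A ⟨a, ha, b, hb, rfl⟩ A' ⟨a', ha', b', hb', rfl⟩ hne'
    have hkey : (a ∩ b) ∩ (a' ∩ b') = (a ∩ a') ∩ (b ∩ b') := by
      rw [Set.inter_inter_inter_comm]
    rw [hkey] at hne' ⊢
    have haa : (a ∩ a').Nonempty := hne'.mono Set.inter_subset_left
    have hbb : (b ∩ b').Nonempty := hne'.mono Set.inter_subset_right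
    exact ⟨a ∩ a', hpiW a ha a' ha' haa, b ∩ b', hpiX b hb b' hb' hbb, rfl⟩
  have hGgen : (⨆ n, MeasurableSpace.comap (W n) inferInstance)
      ⊔ (⨆ n, MeasurableSpace.comap (X n) inferInstance)
      = MeasurableSpace.generateFrom PS := by
    apply le_antisymm
    · apply sup_le
      · rw [← hgenW]
        apply MeasurableSpace.generateFrom_mono
        intro a ha
        exact ⟨a, ha, univ, hunivX, (Set.inter_univ a).symm⟩
      · rw [← hgenX]
        apply MeasurableSpace.generateFrom_mono
        intro b hb
        exact ⟨univ, hunivW, b, hb, (Set.univ_inter b).symm⟩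
    · apply MeasurableSpace.generateFrom_le
      rintro A ⟨a, ha, b, hb, rfl⟩
      exact MeasurableSet.inter
        (le_sup_left (a := ⨆ n, MeasurableSpace.comap (W n) inferInstance)
          (b := ⨆ n, MeasurableSpace.comap (X n) inferInstance) a (measW a ha))
        (le_sup_right (a := ⨆ n, MeasurableSpace.comap (W n) inferInstance)
          (b := ⨆ n, MeasurableSpace.comap (X n) inferInstance) b (measX b hb))
  have hle : MeasurableSpace.generateFrom PS ≤ mΩ := by
    rw [← hGgen]
    apply sup_le
    · exact iSup_le fun n => measurable_iff_comap_le.1 (hWm n)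
    · exact iSup_le fun n => measurable_iff_comap_le.1 (hXm n)
  have hbasic : ∀ t ∈ PS, P t = Q t := by
    rintro t ⟨a, ha, b, hb, rfl⟩
    have h1 : P (a ∩ b) = P a * P b :=
      ((Indep_iff _ _ _).1 hPindep) a b (measW a ha) (measX b hb)
    have h2 : Q (a ∩ b) = Q a * Q b :=
      ((Indep_iff _ _ _).1 hQindep) a b (measW a ha) (measX b hb)
    rw [h1, h2,
      pi_val P Q W hWm hPWind hQWind hPWid hQWid hW0 a ha,
      pi_val P Q X hXm hPXind hQXind hPXid hQXid hX0 b hb]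
  intro A hA
  exact measure_eq_on_generateFrom P Q hpi hle hbasic A (hGgen ▸ hA)

/-- Case 2: if the marginal laws of an i.i.d. family differ, the measures are mutually
singular, witnessed by an explicit SLLN event. -/
lemma singular_of_map_ne {Ω : Type*} [mΩ : MeasurableSpace Ω] (P Q : Measure Ω)
    [IsProbabilityMeasure P] [IsProbabilityMeasure Q]
    (V : ℕ → Ω → ℝ) (hVm : ∀ n, Measurable (V n))
    (hPind : iIndepFun V P)
    (hPid : ∀ n, P.map (V n) = P.map (V 0))
    (hQind : iIndepFun V Q)
    (hQid : ∀ n, Q.map (V n) = Q.map (V 0))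
    (hne : P.map (V 0) ≠ Q.map (V 0)) :
    ∃ (φ : ℝ → ℝ) (c : ℝ), Measurable φ ∧
      P {ω | Filter.Tendsto (fun n : ℕ => (∑ i ∈ Finset.range n, φ (V i ω)) / n)
        Filter.atTop (nhds c)} = 1 ∧
      Q {ω | Filter.Tendsto (fun n : ℕ => (∑ i ∈ Finset.range n, φ (V i ω)) / n)
        Filter.atTop (nhds c)} = 0 := by
  haveI : IsProbabilityMeasure (P.map (V 0)) :=
    Measure.isProbabilityMeasure_map (hVm 0).aemeasurable
  haveI : IsProbabilityMeasure (Q.map (V 0)) :=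
    Measure.isProbabilityMeasure_map (hVm 0).aemeasurable
  obtain ⟨B, hB, hPQB⟩ : ∃ B : Set ℝ, MeasurableSet B ∧ P.map (V 0) B ≠ Q.map (V 0) B := by
    by_contra h
    push_neg at h
    exact hne (Measure.ext fun s hs => h s hs)
  set φ : ℝ → ℝ := B.indicator 1 with hφdef
  have hφ : Measurable φ := measurable_one.indicator hB
  set Y : ℕ → Ω → ℝ := fun n => φ ∘ V n with hY
  set p : ℝ := (P.map (V 0) B).toReal with hp
  set q : ℝ := (Q.map (V 0) B).toReal with hq
  have hpq : p ≠ q := by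
    intro h
    exact hPQB ((ENNReal.toReal_eq_toReal_iff' (measure_ne_top _ _) (measure_ne_top _ _)).1 h)
  have hYbd : ∀ (μ : Measure Ω), IsProbabilityMeasure μ → Integrable (Y 0) μ := by
    intro μ hμ
    refine (integrable_const (1:ℝ)).mono'
      ((hφ.comp (hVm 0)).aestronglyMeasurable) (Filter.Eventually.of_forall fun ω => ?_)
    simp only [hY, Function.comp_apply, Real.norm_eq_abs, hφdef]
    by_cases h : V 0 ω ∈ B <;>
      simp [Set.indicator_of_mem, Set.indicator_of_notMem, h]
  have hEint : ∀ (μ : Measure Ω), IsProbabilityMeasure μ →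
      ∫ ω, Y 0 ω ∂μ = (μ.map (V 0) B).toReal := by
    intro μ _
    have h1 : ∫ ω, Y 0 ω ∂μ = ∫ x, φ x ∂(μ.map (V 0)) :=
      (integral_map (hVm 0).aemeasurable hφ.aestronglyMeasurable).symm
    rw [h1, hφdef, integral_indicator_one hB, measureReal_def]
  have hSLLN : ∀ (μ : Measure Ω), IsProbabilityMeasure μ →
      iIndepFun V μ → (∀ n, μ.map (V n) = μ.map (V 0)) →
      ∀ᵐ ω ∂μ, Filter.Tendsto (fun n : ℕ => (∑ i ∈ Finset.range n, Y i ω) / n)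
        Filter.atTop (nhds ((μ.map (V 0) B).toReal)) := by
    intro μ hμ hind hid
    have hPident : ∀ i, IdentDistrib (Y i) (Y 0) μ μ := fun i =>
      (⟨(hVm i).aemeasurable, (hVm 0).aemeasurable, by rw [hid i]⟩ :
        IdentDistrib (V i) (V 0) μ μ).comp hφ
    have hPpair : Pairwise (Function.onFun (IndepFun · · μ) Y) := fun i j hij =>
      (hind.indepFun hij).comp hφ hφ
    have h := strong_law_ae_real Y (hYbd μ hμ) hPpair hPident
    rwa [hEint μ hμ] at h
  refine ⟨φ, p, hφ, ?_, ?_⟩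
  · have h1 := hSLLN P ‹_› hPind hPid
    have heq : {ω | Filter.Tendsto (fun n : ℕ => (∑ i ∈ Finset.range n, φ (V i ω)) / n)
        Filter.atTop (nhds p)} =ᵐ[P] (univ : Set Ω) := by
      rw [Filter.eventuallyEq_univ]
      exact h1
    rw [measure_congr heq, measure_univ]
  · have h2 := hSLLN Q ‹_› hQind hQid
    rw [MeasureTheory.ae_iff] at h2
    refine measure_mono_null ?_ h2
    intro ω hω
    simp only [mem_setOf_eq, not_not]
    intro hcon
    exact hpq (tendsto_nhds_unique hω hcon)

end Aux

/-- dichotomy: two compound-renewal laws for `S` either coincide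
on `F_∞` or are mutually singular on `F_∞`. -/
theorem stmt_7 {Ω : Type*} [MeasurableSpace Ω]
    (P Q : Measure Ω) [IsProbabilityMeasure P] [IsProbabilityMeasure Q]
    (W X : ℕ → Ω → ℝ)
    (hWm : ∀ n, Measurable (W n)) (hXm : ∀ n, Measurable (X n))
    (hWpos : ∀ n ω, 0 < W n ω) (hXpos : ∀ n ω, 0 < X n ω)
    -- compound renewal process under P
    (hPWind : iIndepFun W P)
    (hPWid : ∀ n, P.map (W n) = P.map (W 0))
    (hPXind : iIndepFun X P)
    (hPXid : ∀ n, P.map (X n) = P.map (X 0))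
    (hPindep : Indep (⨆ n, MeasurableSpace.comap (W n) inferInstance)
      (⨆ n, MeasurableSpace.comap (X n) inferInstance) P)
    -- compound renewal process under Q
    (hQWind : iIndepFun W Q)
    (hQWid : ∀ n, Q.map (W n) = Q.map (W 0))
    (hQXind : iIndepFun X Q)
    (hQXid : ∀ n, Q.map (X n) = Q.map (X 0))
    (hQindep : Indep (⨆ n, MeasurableSpace.comap (W n) inferInstance)
      (⨆ n, MeasurableSpace.comap (X n) inferInstance) Q)
    -- renewal structure and aggregate claims process
    (T : ℕ → Ω → ℝ) (hT : ∀ n ω, T n ω = ∑ k ∈ Finset.range n, W k ω)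
    (hTunb : ∀ ω M, ∃ n, M < T n ω)
    (N : ℝ → Ω → ℕ)
    (hN : ∀ t ω, 0 ≤ t → T (N t ω) ω ≤ t ∧ t < T (N t ω + 1) ω)
    (S : ℝ → Ω → ℝ) (hS : ∀ t ω, S t ω = ∑ k ∈ Finset.range (N t ω), X k ω)
    (F : ℝ → MeasurableSpace Ω)
    (hF : ∀ t, F t = ⨆ u ∈ Set.Icc (0 : ℝ) t, MeasurableSpace.comap (S u) inferInstance)
    (hne : ¬ ∀ A : Set Ω, MeasurableSet[⨆ t ∈ Set.Ici (0 : ℝ), F t] A → P A = Q A) :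
    ∃ E : Set Ω, MeasurableSet[⨆ t ∈ Set.Ici (0 : ℝ), F t] E ∧ P E = 1 ∧ Q E = 0 := by
  -- each S u, u ≥ 0, is F_∞-measurable
  have hS𝔉 : ∀ u : ℝ, 0 ≤ u → Measurable[⨆ t ∈ Set.Ici (0 : ℝ), F t] (S u) := by
    intro u hu
    rw [measurable_iff_comap_le]
    calc MeasurableSpace.comap (S u) inferInstance
        ≤ F u := by
          rw [hF u]
          exact le_iSup₂ (f := fun v (_ : v ∈ Set.Icc (0:ℝ) u) =>
            MeasurableSpace.comap (S v) inferInstance) u ⟨hu, le_refl u⟩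
      _ ≤ ⨆ t ∈ Set.Ici (0 : ℝ), F t :=
          le_iSup₂ (f := fun t (_ : t ∈ Set.Ici (0:ℝ)) => F t) u hu
  -- W and X are F_∞-measurable
  obtain ⟨hW𝔉, hX𝔉⟩ :=
    @renewal_recon Ω (⨆ t ∈ Set.Ici (0 : ℝ), F t) W X hWpos hXpos T hT N hN S hS hS𝔉
  by_cases hW0 : P.map (W 0) = Q.map (W 0)
  · by_cases hX0 : P.map (X 0) = Q.map (X 0)
    · -- both marginals agree : P = Q on F_∞, contradiction with hne
      exfalso
      apply hne
      intro A hA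
      -- F_∞ ≤ G
      have hWG : ∀ n, Measurable[(⨆ n, MeasurableSpace.comap (W n) inferInstance)
          ⊔ (⨆ n, MeasurableSpace.comap (X n) inferInstance)] (W n) := by
        intro n
        rw [measurable_iff_comap_le]
        exact le_trans (le_iSup (fun n => MeasurableSpace.comap (W n) inferInstance) n)
          le_sup_left
      have hXG : ∀ n, Measurable[(⨆ n, MeasurableSpace.comap (W n) inferInstance)
          ⊔ (⨆ n, MeasurableSpace.comap (X n) inferInstance)] (X n) := by
        intro n
        rw [measurable_iff_comap_le]
        exact le_trans (le_iSup (fun n => MeasurableSpace.comap (X n) inferInstance) n)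
          le_sup_right
      have hFG : (⨆ t ∈ Set.Ici (0 : ℝ), F t) ≤ (⨆ n, MeasurableSpace.comap (W n) inferInstance)
          ⊔ (⨆ n, MeasurableSpace.comap (X n) inferInstance) := by
        refine iSup₂_le fun t ht => ?_
        rw [hF t]
        refine iSup₂_le fun u hu => ?_
        rw [← measurable_iff_comap_le]
        exact @renewal_S_measurable Ω ((⨆ n, MeasurableSpace.comap (W n) inferInstance)
          ⊔ (⨆ n, MeasurableSpace.comap (X n) inferInstance)) W X hWG hXG hWpos
          T hT N hN S hS u hu.1
      exact eq_on_sup P Q W X hWm hXm hPWind hPWid hPXind hPXid hPindep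
        hQWind hQWid hQXind hQXid hQindep hW0 hX0 A (hFG A hA)
    · -- X-marginals differ : use the SLLN event for X
      obtain ⟨φ, c, hφ, h1, h0⟩ :=
        singular_of_map_ne P Q X hXm hPXind hPXid hQXind hQXid hX0
      refine ⟨_, ?_, h1, h0⟩
      exact measurableSet_tendsto (nhds c) (fun n =>
        Measurable.div_const (Finset.measurable_sum _ fun i _ => hφ.comp (hX𝔉 i)) _)
  · -- W-marginals differ : use the SLLN event for W
    obtain ⟨φ, c, hφ, h1, h0⟩ :=
      singular_of_map_ne P Q W hWm hPWind hPWid hQWind hQWid hW0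
    refine ⟨_, ?_, h1, h0⟩
    exact measurableSet_tendsto (nhds c) (fun n =>
      Measurable.div_const (Finset.measurable_sum _ fun i _ => hφ.comp (hW𝔉 i)) _)
end

section
/- For a renewal process N with i.i.d. interarrival times, N is a Poisson process with parameter θ > 0 if and only if E[N_t] = tθ for every t ≥ 0. -/
open MeasureTheory ProbabilityTheory Set Real ENNReal


lemma aux_gronwall {θ C A : ℝ} (hθ : 0 < θ) (d : ℝ → ℝ) (hd : Measurable d)
    (hC : ∀ t ∈ Icc (0:ℝ) A, |d t| ≤ C)
    (h : ∀ t ∈ Icc (0:ℝ) A, |d t| ≤ θ * ∫ s in (0:ℝ)..t, |d s|) :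
    ∀ t ∈ Icc (0:ℝ) A, d t = 0 := by
  have hint : ∀ t ∈ Icc (0:ℝ) A, IntervalIntegrable (fun s => |d s|) volume 0 t := by
    intro t ht
    rw [intervalIntegrable_iff_integrableOn_Icc_of_le ht.1]
    refine Measure.integrableOn_of_bounded (M := C) (by simp) hd.abs.aestronglyMeasurable ?_
    refine ae_restrict_of_forall_mem measurableSet_Icc (fun s hs => ?_)
    rw [norm_abs_eq_norm, Real.norm_eq_abs]
    exact hC s ⟨hs.1, hs.2.trans ht.2⟩
  have key : ∀ n : ℕ, ∀ t ∈ Icc (0:ℝ) A, |d t| ≤ C * (θ * t) ^ n / n.factorial := by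
    intro n
    induction n with
    | zero => intro t ht; simpa using hC t ht
    | succ n ih =>
      intro t ht
      have h0t : (0:ℝ) ≤ t := ht.1
      have step : ∫ s in (0:ℝ)..t, |d s| ≤ ∫ s in (0:ℝ)..t, C * (θ * s) ^ n / n.factorial := by
        refine intervalIntegral.integral_mono_on h0t (hint t ht) ?_ ?_
        · exact (Continuous.intervalIntegrable (by fun_prop) _ _)
        · intro s hs; exact ih s ⟨hs.1, hs.2.trans ht.2⟩
      have comp : ∫ s in (0:ℝ)..t, C * (θ * s) ^ n / n.factorial
          = C * θ ^ n / n.factorial * (t ^ (n+1) / (n+1)) := by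
        have : ∀ s : ℝ, C * (θ * s) ^ n / n.factorial
            = (C * θ ^ n / n.factorial) * s ^ n := by
          intro s; rw [mul_pow]; ring
        rw [intervalIntegral.integral_congr (g := fun s => (C * θ ^ n / n.factorial) * s ^ n)
          (fun s _ => this s), intervalIntegral.integral_const_mul, integral_pow]
        push_cast; ring
      calc |d t| ≤ θ * ∫ s in (0:ℝ)..t, |d s| := h t ht
        _ ≤ θ * (C * θ ^ n / n.factorial * (t ^ (n+1) / (n+1))) := by
            exact mul_le_mul_of_nonneg_left (step.trans comp.le) hθ.le
        _ = C * (θ * t) ^ (n+1) / (n+1).factorial := by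
            rw [mul_pow, Nat.factorial_succ]; push_cast; field_simp; ring
  intro t ht
  have habs : |d t| ≤ 0 := by
    refine ge_of_tendsto' (x := Filter.atTop (α := ℕ)) (f := fun n : ℕ => C * (θ * t) ^ n / n.factorial) ?_ (fun n => key n t ht)
    have := FloorSemiring.tendsto_pow_div_factorial_atTop (K := ℝ) (θ * t)
    have h2 := this.const_mul C
    simpa [mul_div_assoc] using h2
  exact abs_eq_zero.mp (le_antisymm habs (abs_nonneg _))


lemma aux_I1 {θ : ℝ} (hθ : 0 < θ) (t : ℝ) :
    ∫ s in (0:ℝ)..t, Real.exp (-(θ*s)) = (1 - Real.exp (-(θ*t))) / θ := by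
  have hderiv : ∀ x ∈ uIcc (0:ℝ) t, HasDerivAt (fun a => -Real.exp (-(θ*a)) / θ)
      (Real.exp (-(θ*x))) x := by
    intro x _
    have h := (hasDerivAt_neg_exp_mul_exp (r := θ) (x := x)).div_const θ
    refine h.congr_deriv ?_
    field_simp
  rw [intervalIntegral.integral_eq_sub_of_hasDerivAt hderiv
    (Continuous.intervalIntegrable (by fun_prop) _ _)]
  field_simp
  rw [mul_zero, neg_zero, Real.exp_zero]
  ring

lemma aux_I2 {θ : ℝ} (hθ : 0 < θ) (t : ℝ) :
    ∫ s in (0:ℝ)..t, s * Real.exp (θ*s)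
      = (t/θ - 1/θ^2) * Real.exp (θ*t) + 1/θ^2 := by
  have hderiv : ∀ x ∈ uIcc (0:ℝ) t, HasDerivAt (fun s => (s/θ - 1/θ^2) * Real.exp (θ*s))
      (x * Real.exp (θ*x)) x := by
    intro x _
    have h1 : HasDerivAt (fun s : ℝ => s/θ - 1/θ^2) (1/θ) x :=
      ((hasDerivAt_id x).div_const θ).sub_const _
    have h2 : HasDerivAt (fun s : ℝ => Real.exp (θ*s)) (Real.exp (θ*x) * θ) x :=
      (Real.hasDerivAt_exp (θ*x)).comp x (by simpa using (hasDerivAt_id x).const_mul θ)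
    have := h1.mul h2
    refine this.congr_deriv ?_
    field_simp
    ring
  rw [intervalIntegral.integral_eq_sub_of_hasDerivAt hderiv
    (Continuous.intervalIntegrable (by fun_prop) _ _)]
  norm_num


/-- a renewal process `N` (with all moments finite) is a Poisson
process with parameter `θ > 0` — i.e. its i.i.d. interarrival times are
`Exp(θ)`-distributed — if and only if `E[N_t] = tθ` for every `t ≥ 0`. -/
theorem stmt_10 {Ω : Type*} [MeasurableSpace Ω]
    (P : Measure Ω) [IsProbabilityMeasure P]
    (W : ℕ → Ω → ℝ) (hWm : ∀ n, Measurable (W n)) (hWpos : ∀ n ω, 0 < W n ω)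
    (hWind : iIndepFun W P)
    (hWid : ∀ n, P.map (W n) = P.map (W 0))
    (T : ℕ → Ω → ℝ) (hT : ∀ n ω, T n ω = ∑ k ∈ Finset.range n, W k ω)
    (hTunb : ∀ ω M, ∃ n, M < T n ω)
    (N : ℝ → Ω → ℕ)
    (hN : ∀ t ω, 0 ≤ t → T (N t ω) ω ≤ t ∧ t < T (N t ω + 1) ω)
    (hmom : ∀ t : ℝ, 0 ≤ t → ∀ m : ℕ, Integrable (fun ω => (N t ω : ℝ) ^ m) P)
    (θ : ℝ) (hθ : 0 < θ) :
    (∀ n, P.map (W n) = expMeasure θ) ↔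
      (∀ t : ℝ, 0 ≤ t → ∫ ω, (N t ω : ℝ) ∂P = t * θ) := by
  classical
  have hTfun : ∀ n, T n = ∑ k ∈ Finset.range n, W k := by
    intro n; funext ω; rw [hT]; simp [Finset.sum_apply]
  have hTm : ∀ n, Measurable (T n) := by
    intro n
    have he : T n = fun ω => ∑ k ∈ Finset.range n, W k ω := funext (hT n)
    rw [he]; exact Finset.measurable_sum _ (fun k _ => hWm k)
  have hTmono : ∀ ω, Monotone (fun n => T n ω) := by
    intro ω
    refine monotone_nat_of_le_succ (fun n => ?_)
    simp only [hT, Finset.sum_range_succ]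
    have := (hWpos n ω).le; linarith
  have hTpos : ∀ n ω, 0 < T (n+1) ω := by
    intro n ω
    rw [hT]
    exact Finset.sum_pos (fun k _ => hWpos k ω) ⟨0, by simp⟩
  set μ : Measure ℝ := P.map (W 0) with hμ
  have hμprob : IsProbabilityMeasure μ := Measure.isProbabilityMeasure_map (hWm 0).aemeasurable
  have hμIic : ∀ s : ℝ, s ≤ 0 → μ (Iic s) = 0 := by
    intro s hs
    rw [hμ, Measure.map_apply (hWm 0) measurableSet_Iic]
    have he : W 0 ⁻¹' Iic s = (∅ : Set Ω) := by
      ext ω; simp only [mem_preimage, mem_Iic, mem_empty_iff_false, iff_false, not_le]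
      exact lt_of_le_of_lt hs (hWpos 0 ω)
    rw [he]; exact measure_empty
  set G : ℕ → ℝ → ℝ≥0∞ := fun k t => P {ω | T (k+1) ω ≤ t} with hGdef
  have hGset : ∀ k (t : ℝ), MeasurableSet {ω | T (k+1) ω ≤ t} := by
    intro k t
    exact measurableSet_le (hTm (k+1)) measurable_const
  have hGmono : ∀ k, Monotone (G k) := by
    intro k t₁ t₂ h12
    exact measure_mono (fun ω hω => le_trans hω h12)
  have hGzero : ∀ k (t : ℝ), t ≤ 0 → G k t = 0 := by
    intro k t ht
    rw [hGdef]
    have he : {ω | T (k+1) ω ≤ t} = (∅ : Set Ω) := by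
      ext ω; simp only [mem_setOf_eq, mem_empty_iff_false, iff_false, not_le]
      exact lt_of_le_of_lt ht (hTpos k ω)
    simp only [he]; exact measure_empty
  have hG0 : ∀ t : ℝ, G 0 t = μ (Iic t) := by
    intro t
    rw [hμ, Measure.map_apply (hWm 0) measurableSet_Iic, hGdef]
    have he : {ω | T (0+1) ω ≤ t} = W 0 ⁻¹' Iic t := by
      ext ω; simp [hT, Finset.sum_range_one]
    simp only [he]
  have hGrec : ∀ k (t : ℝ), G (k+1) t = ∫⁻ y, G k (t - y) ∂μ := by
    intro k t
    have hset : MeasurableSet {p : ℝ × ℝ | p.1 + p.2 ≤ t} :=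
      measurableSet_le (measurable_fst.add measurable_snd) measurable_const
    have hindep : IndepFun (T (k+1)) (W (k+1)) P := by
      rw [hTfun]
      exact hWind.indepFun_sum_range_succ hWm (k+1)
    have hmap : P.map (fun ω => (T (k+1) ω, W (k+1) ω))
        = (P.map (T (k+1))).prod (P.map (W (k+1))) :=
      (indepFun_iff_map_prod_eq_prod_map_map (hTm (k+1)).aemeasurable
        (hWm (k+1)).aemeasurable).mp hindep
    have hpre : {ω | T (k+1+1) ω ≤ t}
        = (fun ω => (T (k+1) ω, W (k+1) ω)) ⁻¹' {p : ℝ × ℝ | p.1 + p.2 ≤ t} := by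
      ext ω
      simp only [mem_setOf_eq, mem_preimage, hT, Finset.sum_range_succ]
    calc G (k+1) t = P ((fun ω => (T (k+1) ω, W (k+1) ω)) ⁻¹' {p : ℝ × ℝ | p.1 + p.2 ≤ t}) := by
          rw [hGdef]; exact congrArg P hpre
      _ = (P.map (fun ω => (T (k+1) ω, W (k+1) ω))) {p : ℝ × ℝ | p.1 + p.2 ≤ t} :=
          (Measure.map_apply ((hTm (k+1)).prodMk (hWm (k+1))) hset).symm
      _ = ((P.map (T (k+1))).prod μ) {p : ℝ × ℝ | p.1 + p.2 ≤ t} := by rw [hmap, hWid]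
      _ = ∫⁻ y, (P.map (T (k+1))) ((fun x => (x, y)) ⁻¹' {p : ℝ × ℝ | p.1 + p.2 ≤ t}) ∂μ :=
          Measure.prod_apply_symm hset
      _ = ∫⁻ y, G k (t - y) ∂μ := by
          refine lintegral_congr (fun y => ?_)
          have h1 : ((fun x => (x, y)) ⁻¹' {p : ℝ × ℝ | p.1 + p.2 ≤ t}) = Iic (t - y) := by
            ext x; simp [le_sub_iff_add_le]
          rw [h1, Measure.map_apply (hTm (k+1)) measurableSet_Iic]
          rfl
  have hGmeasy : ∀ k (t : ℝ), Measurable (fun y => G k (t - y)) := by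
    intro k t
    exact Antitone.measurable (fun y₁ y₂ h12 => hGmono k (sub_le_sub_left h12 t))
  set M : ℝ → ℝ≥0∞ := fun t => ∑' k, G k t with hMdef
  have hNtsum : ∀ t : ℝ, 0 ≤ t → ∀ ω,
      (∑' k, ({ω' | T (k+1) ω' ≤ t}.indicator (fun _ => (1:ℝ≥0∞)) ω)) = (N t ω : ℝ≥0∞) := by
    intro t ht ω
    have h1 : ∀ k, (T (k+1) ω ≤ t ↔ k < N t ω) := by
      intro k
      constructor
      · intro hk
        by_contra hcon
        push_neg at hcon
        have : T (N t ω + 1) ω ≤ T (k+1) ω := hTmono ω (by omega)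
        linarith [(hN t ω ht).2]
      · intro hk
        exact le_trans (hTmono ω (by omega : k + 1 ≤ N t ω)) (hN t ω ht).1
    have h2 : ∀ k, ({ω' | T (k+1) ω' ≤ t}.indicator (fun _ => (1:ℝ≥0∞)) ω)
        = if k < N t ω then 1 else 0 := by
      intro k
      by_cases hk : k < N t ω
      · rw [if_pos hk, indicator_of_mem]
        exact (h1 k).mpr hk
      · rw [if_neg hk, indicator_of_notMem]
        simp only [mem_setOf_eq]
        rw [h1 k]; exact hk
    rw [tsum_congr h2, tsum_eq_sum (s := Finset.range (N t ω))
      (fun k hk => if_neg (by simpa using hk))]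
    rw [Finset.sum_congr rfl (fun k hk => if_pos (Finset.mem_range.mp hk))]
    simp
  have hlint : ∀ t : ℝ, 0 ≤ t → ∫⁻ ω, (N t ω : ℝ≥0∞) ∂P = M t := by
    intro t ht
    calc ∫⁻ ω, (N t ω : ℝ≥0∞) ∂P
        = ∫⁻ ω, ∑' k, ({ω' | T (k+1) ω' ≤ t}.indicator (fun _ => (1:ℝ≥0∞)) ω) ∂P :=
          lintegral_congr (fun ω => (hNtsum t ht ω).symm)
      _ = ∑' k, ∫⁻ ω, ({ω' | T (k+1) ω' ≤ t}.indicator (fun _ => (1:ℝ≥0∞)) ω) ∂P :=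
          lintegral_tsum (fun k => (measurable_one.indicator (hGset k t)).aemeasurable)
      _ = M t := by
          refine tsum_congr (fun k => ?_)
          rw [lintegral_indicator_const (hGset k t)]
          simp [hGdef]
  have hMfin : ∀ t : ℝ, M t < ⊤ := by
    intro t
    rcases le_or_gt t 0 with ht | ht
    · have : M t = 0 := by
        rw [hMdef]
        simp only [ENNReal.tsum_eq_zero]
        exact fun k => hGzero k t ht
      rw [this]; exact ENNReal.zero_lt_top
    · rw [← hlint t ht.le]
      have hi := hmom t ht.le 1
      simp only [pow_one] at hi
      have := hi.hasFiniteIntegral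
      rw [HasFiniteIntegral] at this
      convert this using 2 with ω
      simp
  have hint : ∀ t : ℝ, 0 ≤ t → ∫ ω, (N t ω : ℝ) ∂P = (M t).toReal := by
    intro t ht
    have hi := hmom t ht 1
    simp only [pow_one] at hi
    rw [integral_eq_lintegral_of_nonneg_ae (Filter.Eventually.of_forall (fun ω => by positivity))
      hi.aestronglyMeasurable]
    congr 1
    rw [← hlint t ht]
    exact lintegral_congr (fun ω => by simp)
  have hrenew : ∀ t : ℝ, M t = G 0 t + ∫⁻ y, M (t - y) ∂μ := by
    intro t
    show ∑' k, G k t = G 0 t + ∫⁻ y, ∑' k, G k (t - y) ∂μ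
    rw [tsum_eq_zero_add' ENNReal.summable]
    congr 1
    calc ∑' (b : ℕ), G (b+1) t = ∑' (k : ℕ), ∫⁻ y, G k (t - y) ∂μ :=
          tsum_congr (fun k => hGrec k t)
      _ = ∫⁻ y, ∑' k, G k (t - y) ∂μ :=
          (lintegral_tsum (fun k => (hGmeasy k t).aemeasurable)).symm
  have hMzero : ∀ t : ℝ, t ≤ 0 → M t = 0 := by
    intro t ht
    rw [hMdef]
    simp only [ENNReal.tsum_eq_zero]
    exact fun k => hGzero k t ht
  have hMmono : Monotone M := fun a b hab =>
    Summable.tsum_le_tsum (fun k => hGmono k hab) ENNReal.summable ENNReal.summable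
  have hiff : (∀ t : ℝ, 0 ≤ t → ∫ ω, (N t ω : ℝ) ∂P = t * θ)
      ↔ (∀ t : ℝ, M t = ENNReal.ofReal (t * θ)) := by
    constructor
    · intro h t
      rcases le_or_gt t 0 with ht | ht
      · rw [hMzero t ht, eq_comm, ENNReal.ofReal_eq_zero]
        exact mul_nonpos_of_nonpos_of_nonneg ht hθ.le
      · have h1 := h t ht.le
        rw [hint t ht.le] at h1
        rw [← h1, ENNReal.ofReal_toReal (hMfin t).ne]
    · intro h t ht
      rw [hint t ht, h t, ENNReal.toReal_ofReal (mul_nonneg ht hθ.le)]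
  rw [hiff]
  constructor
  · -- forward direction
    intro hexp
    have hμexp : μ = expMeasure θ := by rw [hμ]; exact hexp 0
    set m : ℝ → ℝ := fun t => (M t).toReal with hmdef
    have hmnonneg : ∀ t, 0 ≤ m t := fun t => ENNReal.toReal_nonneg
    have hmmono : Monotone m := fun a b hab => ENNReal.toReal_mono (hMfin b).ne (hMmono hab)
    have hmmeas : Measurable m := hmmono.measurable
    have hmzero : ∀ t : ℝ, t ≤ 0 → m t = 0 := fun t ht => by
      simp only [hmdef, hMzero t ht, ENNReal.toReal_zero]
    have hMof : ∀ t, M t = ENNReal.ofReal (m t) := fun t =>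
      (ENNReal.ofReal_toReal (hMfin t).ne).symm
    have hpdfreal : ∀ y : ℝ, 0 ≤ y → exponentialPDFReal θ y = θ * Real.exp (-(θ*y)) := by
      intro y hy
      unfold exponentialPDFReal gammaPDFReal
      rw [if_pos hy]
      simp [Real.Gamma_one]
    have hpdfneg : ∀ y : ℝ, ¬ (0 ≤ y) → exponentialPDFReal θ y = 0 := by
      intro y hy
      unfold exponentialPDFReal gammaPDFReal
      rw [if_neg hy]
    -- real renewal equation
    have hmeq : ∀ t : ℝ, 0 ≤ t →
        m t = (1 - Real.exp (-(θ*t))) + ∫ y in (0:ℝ)..t, θ * Real.exp (-(θ*(t-y))) * m y := by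
      intro t ht
      have hG0t : G 0 t = ENNReal.ofReal (1 - Real.exp (-(θ*t))) := by
        rw [hG0 t, hμexp]
        have h1 : expMeasure θ = volume.withDensity (gammaPDF 1 θ) := rfl
        rw [h1, withDensity_apply _ measurableSet_Iic]
        have h2 : gammaPDF 1 θ = exponentialPDF θ := rfl
        rw [h2, lintegral_exponentialPDF_eq_antiDeriv hθ t, if_pos ht]
      have hlw : ∫⁻ y, M (t - y) ∂μ
          = ∫⁻ y, ENNReal.ofReal (exponentialPDFReal θ y * m (t - y)) ∂volume := by
        rw [hμexp]
        have h1 : expMeasure θ = volume.withDensity (exponentialPDF θ) := rfl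
        have hpm : Measurable (exponentialPDF θ) := (measurable_exponentialPDFReal θ).ennreal_ofReal
        rw [h1, lintegral_withDensity_eq_lintegral_mul volume hpm
          (Antitone.measurable (fun a b hab => hMmono (sub_le_sub_left hab t)))]
        refine lintegral_congr (fun y => ?_)
        simp only [Pi.mul_apply]
        rw [hMof (t - y), show exponentialPDF θ y = ENNReal.ofReal (exponentialPDFReal θ y)
          from rfl, ← ENNReal.ofReal_mul (exponentialPDFReal_nonneg hθ y)]
      have hren := hrenew t
      rw [hG0t, hlw] at hren
      have hfin2 : ∫⁻ y, ENNReal.ofReal (exponentialPDFReal θ y * m (t - y)) ∂volume < ⊤ := by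
        refine lt_of_le_of_lt (le_trans le_add_self hren.ge) (hMfin t)
      have hintmeas : Measurable (fun y => exponentialPDFReal θ y * m (t - y)) :=
        (measurable_exponentialPDFReal θ).mul (hmmeas.comp (measurable_const.sub measurable_id))
      have hreal : (∫⁻ y, ENNReal.ofReal (exponentialPDFReal θ y * m (t - y)) ∂volume).toReal
          = ∫ y, exponentialPDFReal θ y * m (t - y) ∂volume := by
        rw [integral_eq_lintegral_of_nonneg_ae (Filter.Eventually.of_forall
          (fun y => mul_nonneg (exponentialPDFReal_nonneg hθ y) (hmnonneg _)))
          hintmeas.aestronglyMeasurable]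
      have hindic : ∫ y, exponentialPDFReal θ y * m (t - y) ∂volume
          = ∫ y in (0:ℝ)..t, θ * Real.exp (-(θ*(t-y))) * m y := by
        have hsupp : ∀ y ∉ Icc (0:ℝ) t, exponentialPDFReal θ y * m (t - y) = 0 := by
          intro y hy
          rcases not_and_or.mp (fun hc => hy (mem_Icc.mpr hc)) with hy1 | hy1
          · rw [hpdfneg y hy1, zero_mul]
          · rw [hmzero (t - y) (by push_neg at hy1; linarith), mul_zero]
        rw [← setIntegral_eq_integral_of_forall_compl_eq_zero hsupp,
          integral_Icc_eq_integral_Ioc, ← intervalIntegral.integral_of_le ht]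
        have hc1 : ∫ y in (0:ℝ)..t, exponentialPDFReal θ y * m (t - y)
            = ∫ y in (0:ℝ)..t, θ * Real.exp (-(θ*y)) * m (t - y) := by
          refine intervalIntegral.integral_congr (fun y hy => ?_)
          rw [uIcc_of_le ht] at hy
          rw [hpdfreal y hy.1]
        rw [hc1]
        have hc2 : ∫ y in (0:ℝ)..t, θ * Real.exp (-(θ*y)) * m (t - y)
            = ∫ y in (0:ℝ)..t, (fun s => θ * Real.exp (-(θ*(t-s))) * m s) (t - y) := by
          refine intervalIntegral.integral_congr (fun y hy => ?_)
          simp only [_root_.sub_sub_cancel]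
        rw [hc2, intervalIntegral.integral_comp_sub_left
          (fun s => θ * Real.exp (-(θ*(t-s))) * m s) t, sub_self, sub_zero]
      have := congrArg ENNReal.toReal hren
      rw [ENNReal.toReal_add ENNReal.ofReal_ne_top hfin2.ne, hreal, hindic,
        ENNReal.toReal_ofReal (by
          have h1 : Real.exp (-(θ*t)) ≤ 1 := Real.exp_le_one_iff.mpr (by nlinarith)
          linarith)] at this
      exact this
    -- subtract the candidate solution
    set d : ℝ → ℝ := fun s => if 0 ≤ s then m s - θ * s else 0 with hddef
    have hdmeas : Measurable d := by
      refine Measurable.ite measurableSet_Ici ?_ measurable_const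
      exact hmmeas.sub (measurable_id.const_mul θ)
    have hdbd : ∀ A : ℝ, 0 ≤ A → ∀ s ∈ Icc (0:ℝ) A, |d s| ≤ m A + θ * A := by
      intro A hA s hs
      simp only [hddef, if_pos hs.1]
      have h1 : m s ≤ m A := hmmono hs.2
      have h2 : 0 ≤ θ * s := mul_nonneg hθ.le hs.1
      have h3 : θ * s ≤ θ * A := mul_le_mul_of_nonneg_left hs.2 hθ.le
      rw [abs_le]
      constructor
      · have := hmnonneg s; nlinarith
      · nlinarith
    have hbint : ∀ (f : ℝ → ℝ) (C A : ℝ), 0 ≤ A → Measurable f →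
        (∀ s ∈ Icc (0:ℝ) A, |f s| ≤ C) → IntervalIntegrable f volume 0 A := by
      intro f C A hA hf hbd
      rw [intervalIntegrable_iff_integrableOn_Icc_of_le hA]
      refine Measure.integrableOn_of_bounded (M := C) (by simp) hf.aestronglyMeasurable ?_
      refine ae_restrict_of_forall_mem measurableSet_Icc (fun s hs => ?_)
      rw [Real.norm_eq_abs]; exact hbd s hs
    have hdint : ∀ A : ℝ, 0 ≤ A → IntervalIntegrable d volume 0 A := fun A hA =>
      hbint d (m A + θ * A) A hA hdmeas (hdbd A hA)
    have hdeq : ∀ t : ℝ, 0 ≤ t →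
        d t = θ * Real.exp (-(θ*t)) * ∫ s in (0:ℝ)..t, Real.exp (θ*s) * d s := by
      intro t ht
      have h1 := hmeq t ht
      have hrw : ∀ s ∈ uIcc (0:ℝ) t, θ * Real.exp (-(θ*(t-s))) * m s
          = (θ * Real.exp (-(θ*t))) * (Real.exp (θ*s) * d s)
            + (θ * Real.exp (-(θ*t))) * (s * Real.exp (θ*s)) * θ := by
        intro s hs
        rw [uIcc_of_le ht] at hs
        simp only [hddef, if_pos hs.1]
        rw [show -(θ*(t-s)) = -(θ*t) + θ*s by ring, Real.exp_add]
        ring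
      have hexpd : IntervalIntegrable (fun s => Real.exp (θ*s) * d s) volume 0 t := by
        refine hbint _ (Real.exp (θ*t) * (m t + θ * t)) t ht
          ((Real.measurable_exp.comp (measurable_id.const_mul θ)).mul hdmeas) ?_
        intro s hs
        rw [abs_mul, abs_of_pos (Real.exp_pos _)]
        have h2 : Real.exp (θ*s) ≤ Real.exp (θ*t) :=
          Real.exp_le_exp.mpr (mul_le_mul_of_nonneg_left hs.2 hθ.le)
        have h3 := hdbd t ht s hs
        have h4 := abs_nonneg (d s)
        nlinarith [Real.exp_pos (θ*t)]
      rw [intervalIntegral.integral_congr hrw, intervalIntegral.integral_add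
        (by exact (hexpd.const_mul _))
        (by exact (((Continuous.intervalIntegrable (by fun_prop) 0 t).const_mul _).mul_const _)),
        intervalIntegral.integral_const_mul, intervalIntegral.integral_mul_const,
        intervalIntegral.integral_const_mul, aux_I2 hθ t] at h1
      have e1 : Real.exp (-(θ*t)) * Real.exp (θ*t) = 1 := by
        rw [← Real.exp_add]; norm_num
      have hθ' : θ ≠ 0 := hθ.ne'
      have h6 : θ * Real.exp (-(θ*t)) * ((t/θ - 1/θ^2) * Real.exp (θ*t) + 1/θ^2) * θ
          = t*θ*(Real.exp (-(θ*t)) * Real.exp (θ*t))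
            - (Real.exp (-(θ*t)) * Real.exp (θ*t)) + Real.exp (-(θ*t)) := by
        field_simp
      rw [h6, e1] at h1
      simp only [hddef, if_pos ht]
      linarith
    have hdabs : ∀ t : ℝ, 0 ≤ t → |d t| ≤ θ * ∫ s in (0:ℝ)..t, |d s| := by
      intro t ht
      have hi3 : IntervalIntegrable (fun s => Real.exp (-(θ*t)) * |Real.exp (θ*s) * d s|)
          volume 0 t := by
        refine hbint _ (Real.exp (-(θ*t)) * (Real.exp (θ*t) * (m t + θ * t))) t ht
          ((((Real.measurable_exp.comp (measurable_id.const_mul θ)).mul hdmeas).abs).const_mul _) ?_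
        intro s hs
        have h2 : Real.exp (θ*s) ≤ Real.exp (θ*t) :=
          Real.exp_le_exp.mpr (mul_le_mul_of_nonneg_left hs.2 hθ.le)
        have h3 := hdbd t ht s hs
        rw [abs_mul, abs_of_pos (Real.exp_pos _), abs_abs, abs_mul,
          abs_of_pos (Real.exp_pos _)]
        have h5 : Real.exp (θ*s) * |d s| ≤ Real.exp (θ*t) * (m t + θ * t) :=
          mul_le_mul h2 h3 (abs_nonneg _) (Real.exp_pos _).le
        calc Real.exp (-(θ*t)) * (Real.exp (θ*s) * |d s|)
            ≤ Real.exp (-(θ*t)) * (Real.exp (θ*t) * (m t + θ * t)) :=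
              mul_le_mul_of_nonneg_left h5 (Real.exp_pos _).le
          _ = Real.exp (-(θ*t)) * (Real.exp (θ*t) * (m t + θ * t)) := rfl
      have hi4 : IntervalIntegrable (fun s => |d s|) volume 0 t :=
        hbint _ (m t + θ * t) t ht hdmeas.abs (fun s hs => by rw [abs_abs]; exact hdbd t ht s hs)
      rw [hdeq t ht]
      calc |θ * Real.exp (-(θ*t)) * ∫ s in (0:ℝ)..t, Real.exp (θ*s) * d s|
          = θ * (Real.exp (-(θ*t)) * |∫ s in (0:ℝ)..t, Real.exp (θ*s) * d s|) := by
            rw [abs_mul, abs_mul, abs_of_pos hθ, abs_of_pos (Real.exp_pos _)]; ring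
        _ ≤ θ * (Real.exp (-(θ*t)) * ∫ s in (0:ℝ)..t, |Real.exp (θ*s) * d s|) := by
            refine mul_le_mul_of_nonneg_left (mul_le_mul_of_nonneg_left
              (intervalIntegral.abs_integral_le_integral_abs ht) (Real.exp_pos _).le) hθ.le
        _ = θ * ∫ s in (0:ℝ)..t, Real.exp (-(θ*t)) * |Real.exp (θ*s) * d s| := by
            rw [intervalIntegral.integral_const_mul]
        _ ≤ θ * ∫ s in (0:ℝ)..t, |d s| := by
            refine mul_le_mul_of_nonneg_left
              (intervalIntegral.integral_mono_on ht hi3 hi4 (fun s hs => ?_)) hθ.le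
            rw [abs_mul, abs_of_pos (Real.exp_pos _)]
            have h5 : Real.exp (-(θ*t)) * Real.exp (θ*s) ≤ 1 := by
              rw [← Real.exp_add]
              refine Real.exp_le_one_iff.mpr ?_
              nlinarith [hs.1, hs.2]
            have h4 := abs_nonneg (d s)
            nlinarith [Real.exp_pos (-(θ*t)), Real.exp_pos (θ*s)]
    have hdzero : ∀ t : ℝ, 0 ≤ t → d t = 0 := by
      intro t ht
      exact aux_gronwall (A := t) hθ d hdmeas (hdbd t ht) (fun s hs => hdabs s hs.1) t
        (mem_Icc.mpr ⟨ht, le_rfl⟩)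
    intro t
    rcases le_or_gt t 0 with ht | ht
    · rw [hMzero t ht, eq_comm, ENNReal.ofReal_eq_zero]
      exact mul_nonpos_of_nonpos_of_nonneg ht hθ.le
    · have h1 := hdzero t ht.le
      simp only [hddef, if_pos ht.le] at h1
      rw [hMof t, show m t = t * θ by linarith]
  · -- converse direction
    intro h
    have hμexp : μ = expMeasure θ := by
      set F : ℝ → ℝ := fun s => (μ (Iic s)).toReal with hFdef
      have hFof : ∀ s, μ (Iic s) = ENNReal.ofReal (F s) := fun s =>
        (ENNReal.ofReal_toReal (measure_ne_top μ _)).symm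
      have hFmono : Monotone F := fun a b hab =>
        ENNReal.toReal_mono (measure_ne_top μ _) (measure_mono (Iic_subset_Iic.mpr hab))
      have hFmeas : Measurable F := hFmono.measurable
      have hFnonneg : ∀ s, 0 ≤ F s := fun s => ENNReal.toReal_nonneg
      have hFle : ∀ s, F s ≤ 1 := fun s => by
        rw [hFdef]
        exact ENNReal.toReal_le_of_le_ofReal zero_le_one (by simpa using prob_le_one)
      have hFzero : ∀ s : ℝ, s ≤ 0 → F s = 0 := fun s hs => by
        rw [hFdef]; simp [hμIic s hs]
      -- real renewal equation for F
      have hFeq : ∀ t : ℝ, 0 ≤ t → t * θ = F t + θ * ∫ s in (0:ℝ)..t, F s := by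
        intro t ht
        have h1 := hrenew t
        rw [h t, hG0 t] at h1
        -- compute the lintegral
        have h2 : ∀ y : ℝ, M (t - y) = ENNReal.ofReal θ * ENNReal.ofReal (t - y) := by
          intro y
          rw [h (t - y), mul_comm (t - y) θ, ENNReal.ofReal_mul hθ.le]
        have h3 : ∫⁻ y, M (t - y) ∂μ
            = ENNReal.ofReal θ * ∫⁻ y, ENNReal.ofReal (t - y) ∂μ := by
          rw [lintegral_congr h2, lintegral_const_mul _ (by
            exact (measurable_const.sub measurable_id).ennreal_ofReal)]
        -- layer cake
        have hS : MeasurableSet {p : ℝ × ℝ | p.1 ≤ p.2 ∧ p.2 ≤ t} := by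
          refine MeasurableSet.inter ?_ ?_
          · exact measurableSet_le measurable_fst measurable_snd
          · exact measurableSet_le measurable_snd measurable_const
        have h4 : ∫⁻ y, ENNReal.ofReal (t - y) ∂μ
            = ∫⁻ s in Iic t, μ (Iic s) ∂volume := by
          have hL : ∫⁻ y, ENNReal.ofReal (t - y) ∂μ
              = (μ.prod volume) {p : ℝ × ℝ | p.1 ≤ p.2 ∧ p.2 ≤ t} := by
            rw [Measure.prod_apply hS]
            refine (lintegral_congr (fun y => ?_)).symm
            have : (Prod.mk y ⁻¹' {p : ℝ × ℝ | p.1 ≤ p.2 ∧ p.2 ≤ t}) = Icc y t := by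
              ext s; simp [mem_Icc]
            rw [this, Real.volume_Icc]
          have hR : (μ.prod volume) {p : ℝ × ℝ | p.1 ≤ p.2 ∧ p.2 ≤ t}
              = ∫⁻ s in Iic t, μ (Iic s) ∂volume := by
            rw [Measure.prod_apply_symm hS, ← lintegral_indicator measurableSet_Iic _]
            refine lintegral_congr (fun s => ?_)
            by_cases hs : s ≤ t
            · rw [indicator_of_mem (mem_Iic.mpr hs)]
              congr 1
              ext x; simp [hs]
            · rw [indicator_of_notMem (fun hc => hs (mem_Iic.mp hc))]
              have : ((fun x => (x, s)) ⁻¹' {p : ℝ × ℝ | p.1 ≤ p.2 ∧ p.2 ≤ t}) = ∅ := by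
                ext x; simp [hs]
              rw [this]; exact measure_empty
          rw [hL, hR]
        have h5 : ∫⁻ s in Iic t, μ (Iic s) ∂volume
            = ∫⁻ s in Ioc 0 t, ENNReal.ofReal (F s) ∂volume := by
          rw [← Iic_union_Ioc_eq_Iic ht, lintegral_union measurableSet_Ioc
            (Iic_disjoint_Ioc le_rfl)]
          have hz : ∫⁻ s in Iic (0:ℝ), μ (Iic s) ∂volume = 0 := by
            rw [setLIntegral_congr_fun measurableSet_Iic
              (fun s (hs : s ≤ 0) => hμIic s hs)]
            simp
          rw [hz, zero_add]
          exact setLIntegral_congr_fun measurableSet_Ioc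
            (fun s _ => hFof s)
        have h6fin : ∫⁻ s in Ioc 0 t, ENNReal.ofReal (F s) ∂volume < ⊤ := by
          refine lt_of_le_of_lt (setLIntegral_mono measurable_const
            (fun s _ => ?_)) (?_ : ∫⁻ _ in Ioc (0:ℝ) t, 1 ∂volume < ⊤)
          · exact ENNReal.ofReal_le_of_le_toReal (by simpa using hFle s)
          · rw [setLIntegral_const, one_mul, Real.volume_Ioc]
            exact ENNReal.ofReal_lt_top
        have h7 : ∫⁻ s in Ioc 0 t, ENNReal.ofReal (F s) ∂volume
            = ENNReal.ofReal (∫ s in (0:ℝ)..t, F s) := by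
          rw [intervalIntegral.integral_of_le ht,
            integral_eq_lintegral_of_nonneg_ae
              (Filter.Eventually.of_forall (fun s => hFnonneg s))
              hFmeas.aestronglyMeasurable.restrict,
            ENNReal.ofReal_toReal h6fin.ne]
        -- combine and take toReal
        rw [h3, h4, h5, h7, hFof t] at h1
        have := congrArg ENNReal.toReal h1
        rw [ENNReal.toReal_ofReal (mul_nonneg ht hθ.le), ENNReal.toReal_add (by
            exact ENNReal.ofReal_ne_top) (by
            exact ENNReal.mul_ne_top ENNReal.ofReal_ne_top ENNReal.ofReal_ne_top),
          ENNReal.toReal_mul, ENNReal.toReal_ofReal hθ.le,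
          ENNReal.toReal_ofReal (hFnonneg t),
          ENNReal.toReal_ofReal (by
            rw [intervalIntegral.integral_of_le ht]
            exact setIntegral_nonneg measurableSet_Ioc (fun s _ => hFnonneg s))] at this
        exact this
      -- solve the integral equation
      set D : ℝ → ℝ := fun s => if 0 ≤ s then F s - (1 - Real.exp (-(θ*s))) else 0 with hDdef
      have hDmeas : Measurable D := by
        refine Measurable.ite measurableSet_Ici ?_ measurable_const
        exact hFmeas.sub (measurable_const.sub
          (Real.continuous_exp.comp ((continuous_const.mul continuous_id).neg)).measurable)
      have hDbd : ∀ s : ℝ, |D s| ≤ 2 := by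
        intro s
        simp only [hDdef]
        by_cases hs : 0 ≤ s
        · rw [if_pos hs, abs_le]
          have h1 : Real.exp (-(θ*s)) ≤ 1 := Real.exp_le_one_iff.mpr (by nlinarith)
          have h2 : 0 < Real.exp (-(θ*s)) := Real.exp_pos _
          constructor
          · have := hFnonneg s; nlinarith
          · have := hFle s; nlinarith
        · rw [if_neg hs]; norm_num
      have hDint : ∀ t : ℝ, 0 ≤ t → IntervalIntegrable D volume 0 t := by
        intro t ht
        rw [intervalIntegrable_iff_integrableOn_Icc_of_le ht]
        refine Measure.integrableOn_of_bounded (M := 2) (by simp) hDmeas.aestronglyMeasurable ?_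
        exact Filter.Eventually.of_forall (fun s => by rw [Real.norm_eq_abs]; exact hDbd s)
      have hDeq : ∀ t : ℝ, 0 ≤ t → D t = -θ * ∫ s in (0:ℝ)..t, D s := by
        intro t ht
        have hsplit : ∫ s in (0:ℝ)..t, F s
            = (∫ s in (0:ℝ)..t, D s) + ∫ s in (0:ℝ)..t, (1 - Real.exp (-(θ*s))) := by
          rw [← intervalIntegral.integral_add (hDint t ht)
            (Continuous.intervalIntegrable (by fun_prop) _ _)]
          refine intervalIntegral.integral_congr (fun s hs => ?_)
          rw [uIcc_of_le ht] at hs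
          simp only [hDdef]
          simp only [if_pos hs.1]
          ring
        have hI : ∫ s in (0:ℝ)..t, (1 - Real.exp (-(θ*s)))
            = t - (1 - Real.exp (-(θ*t))) / θ := by
          rw [intervalIntegral.integral_sub (Continuous.intervalIntegrable (by fun_prop) _ _)
            (Continuous.intervalIntegrable (by fun_prop) _ _), aux_I1 hθ t]
          simp
        have h1 := hFeq t ht
        rw [hsplit, hI] at h1
        simp only [hDdef]
        simp only [if_pos ht]
        field_simp at h1 ⊢
        linarith
      have hDzero : ∀ t : ℝ, 0 ≤ t → D t = 0 := by
        intro t ht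
        refine aux_gronwall (A := t) hθ D hDmeas (fun s _ => hDbd s) (fun s hs => ?_) t
          (mem_Icc.mpr ⟨ht, le_rfl⟩)
        rw [hDeq s hs.1]
        rw [abs_mul, abs_neg, abs_of_pos hθ]
        refine mul_le_mul_of_nonneg_left ?_ hθ.le
        calc |∫ u in (0:ℝ)..s, D u| ≤ ∫ u in (0:ℝ)..s, |D u| :=
              intervalIntegral.abs_integral_le_integral_abs hs.1
          _ ≤ ∫ u in (0:ℝ)..s, |D u| := le_rfl
      have hFexp : ∀ s : ℝ, 0 ≤ s → F s = 1 - Real.exp (-(θ*s)) := by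
        intro s hs
        have := hDzero s hs
        simp only [hDdef] at this
        simp only [if_pos hs] at this
        linarith
      -- conclude μ = expMeasure θ
      have hexpProb : IsProbabilityMeasure (expMeasure θ) := isProbabilityMeasure_expMeasure hθ
      refine Measure.ext_of_Iic μ (expMeasure θ) (fun a => ?_)
      have hexpIic : expMeasure θ (Iic a)
          = ENNReal.ofReal (if 0 ≤ a then 1 - Real.exp (-(θ*a)) else 0) := by
        have h1 : expMeasure θ = volume.withDensity (gammaPDF 1 θ) := rfl
        have h2 : gammaPDF 1 θ = exponentialPDF θ := rfl
        rw [h1, withDensity_apply _ measurableSet_Iic, h2]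
        exact lintegral_exponentialPDF_eq_antiDeriv hθ a
      rw [hexpIic]
      by_cases ha : 0 ≤ a
      · rw [if_pos ha, hFof a, hFexp a ha]
      · rw [if_neg ha, hμIic a (le_of_not_ge ha)]
        simp
    intro n
    rw [hWid n]; exact hμexp
end
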